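/- arXiv:1806.08142 — 5 statements merged into one kernel-verified Lean document; each statement's English description precedes it below -/
import Mathlib

section
/- Let π be a linear Poisson tensor on ℝ^N that does not depend on the variable x_p for some fixed 1 ≤ p ≤ N, and let c be a linear Casimir function for π. Then for every λ ∈ ℝ both of the following 2N×2N matrix fields on ℝ^{2N} are Poisson tensors: (a) the one with blocks Π^{xx}(x,y) = λ·π(y), Π^{xy}(x,y) = π(x) + c(x)·E_pp, Π^{yx}(x,y) = π(x) − c(x)·E_pp, Π^{yy}(x,y) = π(y); and (b) the one with blocks Π^{xx}(x,y) = λ·π(y), Π^{xy}(x,y) = π(x) + c(y)·E_pp, Π^{yx}(x,y) = π(x) − c(y)·E_pp, Π^{yy}(x,y) = π(y). -/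
open scoped ContDiff

/-- Partial derivative `∂f/∂z_s` at `z`, for functions on `ℝ^ι`. -/
noncomputable def pd {ι : Type} [Fintype ι] [DecidableEq ι]
    (s : ι) (f : (ι → ℝ) → ℝ) (x : ι → ℝ) : ℝ :=
  fderiv ℝ f x (Pi.single s 1)

/-- A Poisson tensor on `ℝ^ι`: a smooth antisymmetric matrix field satisfying the
Jacobi condition. -/
def IsPoissonTensor {ι : Type} [Fintype ι] [DecidableEq ι]
    (π : (ι → ℝ) → Matrix ι ι ℝ) : Prop :=
  (∀ i j, ContDiff ℝ ∞ fun x => π x i j) ∧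
  (∀ x i j, π x j i = - π x i j) ∧
  (∀ x i j k, ∑ s, (pd s (fun y => π y i j) x * π x s k
      + pd s (fun y => π y k i) x * π x s j
      + pd s (fun y => π y j k) x * π x s i) = 0)

/-- `c` is a (smooth) Casimir function for `π`. -/
def IsCasimir {ι : Type} [Fintype ι] [DecidableEq ι]
    (π : (ι → ℝ) → Matrix ι ι ℝ) (c : (ι → ℝ) → ℝ) : Prop :=
  ContDiff ℝ ∞ c ∧ ∀ x j, ∑ s, pd s c x * π x s j = 0

/-- The matrix of partial derivatives `(∂π_{ij}/∂x_s)(x)`. -/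
noncomputable def pdMat {N : ℕ} (s : Fin N)
    (π : (Fin N → ℝ) → Matrix (Fin N) (Fin N) ℝ) (x : Fin N → ℝ) :
    Matrix (Fin N) (Fin N) ℝ :=
  Matrix.of fun i j => pd s (fun y => π y i j) x

/-- The `x`-part of a point `z = (x,y) ∈ ℝ^{2N}`. -/
def Xc {N : ℕ} (z : (Fin N ⊕ Fin N) → ℝ) : Fin N → ℝ := fun i => z (Sum.inl i)

/-- The `y`-part of a point `z = (x,y) ∈ ℝ^{2N}`. -/
def Yc {N : ℕ} (z : (Fin N ⊕ Fin N) → ℝ) : Fin N → ℝ := fun i => z (Sum.inr i)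

/-- A linear function `c(x) = ∑ s, a_s x_s`. -/
def IsLinearFun {N : ℕ} (c : (Fin N → ℝ) → ℝ) : Prop :=
  ∃ a : Fin N → ℝ, ∀ x, c x = ∑ s, a s * x s

/-- A linear (Lie–Poisson) tensor: `π_{ij}(x) = ∑ n, c^n_{ij} x_n`. -/
def IsLinearTensor {N : ℕ} (π : (Fin N → ℝ) → Matrix (Fin N) (Fin N) ℝ) : Prop :=
  ∃ C : Fin N → Fin N → Fin N → ℝ, ∀ x i j, π x i j = ∑ n, C i j n * x n

/-! ### Auxiliary lemmas -/

section helpers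
variable {κ : Type} [Fintype κ] [DecidableEq κ]

lemma contDiff_linsum (g : κ → ℝ) : ContDiff ℝ ∞ fun w : κ → ℝ => ∑ τ, g τ * w τ := by
  have h : (fun w : κ → ℝ => ∑ τ, g τ * w τ)
      = ⇑(∑ τ, g τ • (ContinuousLinearMap.proj τ : (κ → ℝ) →L[ℝ] ℝ)) := by
    funext w; simp [ContinuousLinearMap.sum_apply]
  rw [h]; exact ContinuousLinearMap.contDiff _

lemma pd_linear (g : κ → ℝ) (σ : κ) (z : κ → ℝ) :
    pd σ (fun w : κ → ℝ => ∑ τ, g τ * w τ) z = g σ := by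
  have h : (fun w : κ → ℝ => ∑ τ, g τ * w τ)
      = ⇑(∑ τ, g τ • (ContinuousLinearMap.proj τ : (κ → ℝ) →L[ℝ] ℝ)) := by
    funext w; simp [ContinuousLinearMap.sum_apply]
  rw [pd, h, ContinuousLinearMap.fderiv]
  simp [ContinuousLinearMap.sum_apply, Pi.single_apply, mul_ite]

lemma sum_mul_single (g : κ → ℝ) (n : κ) : ∑ m, g m * (Pi.single n 1 : κ → ℝ) m = g n := by
  simp [Pi.single_apply, mul_ite, Finset.sum_ite_eq']

/-- A matrix field all of whose entries are explicit linear functions of the point,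
with coefficients `K`, is a Poisson tensor as soon as the coefficients are
antisymmetric and satisfy the structure-constant Jacobi identity. -/
lemma isPoisson_of_linear (P : (κ → ℝ) → Matrix κ κ ℝ) (K : κ → κ → κ → ℝ)
    (hK : ∀ z i j, P z i j = ∑ τ, K i j τ * z τ)
    (hKa : ∀ i j τ, K j i τ = - K i j τ)
    (hJK : ∀ i j k τ, ∑ σ, (K i j σ * K σ k τ + K k i σ * K σ j τ + K j k σ * K σ i τ) = 0) :
    IsPoissonTensor P := by
  have hpd : ∀ (z : κ → ℝ) (i j : κ) (σ : κ), pd σ (fun w => P w i j) z = K i j σ := by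
    intro z i j σ
    have hfe : (fun w => P w i j) = fun w => ∑ τ, K i j τ * w τ := funext fun w => hK w i j
    rw [hfe, pd_linear]
  refine ⟨?_, ?_, ?_⟩
  · intro i j
    have hfe : (fun z => P z i j) = fun z => ∑ τ, K i j τ * z τ := funext fun z => hK z i j
    rw [hfe]; exact contDiff_linsum _
  · intro z i j
    rw [hK, hK, ← Finset.sum_neg_distrib]
    exact Finset.sum_congr rfl fun τ _ => by rw [hKa]; ring
  · intro x i j k
    calc ∑ σ, (pd σ (fun y => P y i j) x * P x σ k + pd σ (fun y => P y k i) x * P x σ j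
          + pd σ (fun y => P y j k) x * P x σ i)
        = ∑ σ, ∑ τ, ((K i j σ * K σ k τ + K k i σ * K σ j τ + K j k σ * K σ i τ) * x τ) := by
          refine Finset.sum_congr rfl fun σ _ => ?_
          rw [hpd, hpd, hpd, hK x σ k, hK x σ j, hK x σ i, Finset.mul_sum, Finset.mul_sum,
            Finset.mul_sum, ← Finset.sum_add_distrib, ← Finset.sum_add_distrib]
          exact Finset.sum_congr rfl fun τ _ => by ring
      _ = ∑ τ, (∑ σ, (K i j σ * K σ k τ + K k i σ * K σ j τ + K j k σ * K σ i τ)) * x τ := by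
          rw [Finset.sum_comm]
          exact Finset.sum_congr rfl fun τ _ => (Finset.sum_mul _ _ _).symm
      _ = 0 := Finset.sum_eq_zero fun τ _ => by rw [hJK, zero_mul]

end helpers

/-- `ind p i j = (E_pp)_{ij}`. -/
def ind {N : ℕ} (p i j : Fin N) : ℝ := if i = p ∧ j = p then 1 else 0

lemma ind_comm {N : ℕ} (p i j : Fin N) : ind p i j = ind p j i := by
  simp [ind, and_comm]

lemma ind_mul {N : ℕ} (p a b c d : Fin N) :
    ind p a b * ind p c d = ind p d a * ind p c b := by
  unfold ind
  by_cases ha : a = p <;> by_cases hb : b = p <;> by_cases hc : c = p <;> by_cases hd : d = p <;>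
    simp [ha, hb, hc, hd]

lemma stdBasis_eq_ind {N : ℕ} (p i j : Fin N) :
    Matrix.single p p (1 : ℝ) i j = ind p i j := by
  simp [Matrix.single, ind, eq_comm]

/-- Structure constants of the big tensor. -/
def Kmat {N : ℕ} (p : Fin N) (C : Fin N → Fin N → Fin N → ℝ) (b : (Fin N ⊕ Fin N) → ℝ)
    (lam : ℝ) : (Fin N ⊕ Fin N) → (Fin N ⊕ Fin N) → (Fin N ⊕ Fin N) → ℝ
  | Sum.inl _, Sum.inl _, Sum.inl _ => 0
  | Sum.inl i, Sum.inl j, Sum.inr n => lam * C i j n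
  | Sum.inl i, Sum.inr j, Sum.inl n => C i j n + b (Sum.inl n) * ind p i j
  | Sum.inl i, Sum.inr j, Sum.inr n => b (Sum.inr n) * ind p i j
  | Sum.inr i, Sum.inl j, Sum.inl n => C i j n - b (Sum.inl n) * ind p i j
  | Sum.inr i, Sum.inl j, Sum.inr n => -(b (Sum.inr n) * ind p i j)
  | Sum.inr _, Sum.inr _, Sum.inl _ => 0
  | Sum.inr i, Sum.inr j, Sum.inr n => C i j n

section main
variable {N : ℕ} (p : Fin N) (C : Fin N → Fin N → Fin N → ℝ) (b : (Fin N ⊕ Fin N) → ℝ) (lam : ℝ)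

lemma Kmat_anti (hCa : ∀ i j n, C j i n = - C i j n) :
    ∀ i j τ, Kmat p C b lam j i τ = - Kmat p C b lam i j τ := by
  rintro (i | i) (j | j) (τ | τ) <;>
    simp only [Kmat, hCa j i, ind_comm p j i] <;> ring


lemma Kmat_jac (hCp : ∀ i j, C i j p = 0)
    (jacC : ∀ i j k n, ∑ s, (C i j s * C s k n + C k i s * C s j n + C j k s * C s i n) = 0)
    (casL : ∀ j n, ∑ s, b (Sum.inl s) * C s j n = 0)
    (casR : ∀ j n, ∑ s, b (Sum.inr s) * C s j n = 0) :
    ∀ i j k τ, ∑ σ, (Kmat p C b lam i j σ * Kmat p C b lam σ k τ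
      + Kmat p C b lam k i σ * Kmat p C b lam σ j τ
      + Kmat p C b lam j k σ * Kmat p C b lam σ i τ) = 0 := by
  have CE : ∀ (i j s k : Fin N), C i j s * ind p s k = 0 := by
    intro i j s k
    rcases eq_or_ne s p with rfl | hs
    · rw [hCp, zero_mul]
    · simp [ind, hs]
  have shift : ∀ f g h : (Fin N ⊕ Fin N) → ℝ,
      ∑ σ, (f σ + g σ + h σ) = ∑ σ, (g σ + h σ + f σ) :=
    fun f g h => Finset.sum_congr rfl fun σ _ => by ring
  have core1 : ∀ (i j k : Fin N) (τ : Fin N ⊕ Fin N),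
      ∑ σ, (Kmat p C b lam (.inl i) (.inl j) σ * Kmat p C b lam σ (.inl k) τ
        + Kmat p C b lam (.inl k) (.inl i) σ * Kmat p C b lam σ (.inl j) τ
        + Kmat p C b lam (.inl j) (.inl k) σ * Kmat p C b lam σ (.inl i) τ) = 0 := by
    rintro i j k (τ | τ) <;> rw [Fintype.sum_sum_type] <;>
      simp only [Kmat, zero_mul, mul_zero, add_zero, zero_add, Finset.sum_const_zero]
    · calc ∑ s, (lam * C i j s * (C s k τ - b (Sum.inl τ) * ind p s k)
            + lam * C k i s * (C s j τ - b (Sum.inl τ) * ind p s j)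
            + lam * C j k s * (C s i τ - b (Sum.inl τ) * ind p s i))
          = ∑ s, lam * (C i j s * C s k τ + C k i s * C s j τ + C j k s * C s i τ) :=
            Finset.sum_congr rfl fun s _ => by
              linear_combination (-(lam * b (Sum.inl τ))) * CE i j s k
                + (-(lam * b (Sum.inl τ))) * CE k i s j + (-(lam * b (Sum.inl τ))) * CE j k s i
        _ = 0 := by rw [← Finset.mul_sum, jacC, mul_zero]
    · exact Finset.sum_eq_zero fun s _ => by
        linear_combination (-(lam * b (Sum.inr τ))) * CE i j s k
          + (-(lam * b (Sum.inr τ))) * CE k i s j + (-(lam * b (Sum.inr τ))) * CE j k s i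
  have core2 : ∀ (i j k : Fin N) (τ : Fin N ⊕ Fin N),
      ∑ σ, (Kmat p C b lam (.inl i) (.inl j) σ * Kmat p C b lam σ (.inr k) τ
        + Kmat p C b lam (.inr k) (.inl i) σ * Kmat p C b lam σ (.inl j) τ
        + Kmat p C b lam (.inl j) (.inr k) σ * Kmat p C b lam σ (.inl i) τ) = 0 := by
    rintro i j k (τ | τ) <;> rw [Fintype.sum_sum_type] <;>
      simp only [Kmat, zero_mul, mul_zero, add_zero, zero_add, Finset.sum_const_zero]
    · calc ∑ s, (-(b (Sum.inr s) * ind p k i) * (C s j τ - b (Sum.inl τ) * ind p s j)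
            + b (Sum.inr s) * ind p j k * (C s i τ - b (Sum.inl τ) * ind p s i))
          = ∑ s, ((-(ind p k i)) * (b (Sum.inr s) * C s j τ)
              + ind p j k * (b (Sum.inr s) * C s i τ)) :=
            Finset.sum_congr rfl fun s _ => by
              linear_combination (b (Sum.inr s) * b (Sum.inl τ)) * ind_mul p k i s j
        _ = 0 := by
            rw [Finset.sum_add_distrib, ← Finset.mul_sum, ← Finset.mul_sum, casR, casR]
            ring
    · rw [← Finset.sum_add_distrib]
      calc ∑ s, (((C k i s - b (Sum.inl s) * ind p k i) * (lam * C s j τ)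
            + (C j k s + b (Sum.inl s) * ind p j k) * (lam * C s i τ))
            + (lam * C i j s * C s k τ
              + -(b (Sum.inr s) * ind p k i) * -(b (Sum.inr τ) * ind p s j)
              + b (Sum.inr s) * ind p j k * -(b (Sum.inr τ) * ind p s i)))
          = ∑ s, (lam * (C i j s * C s k τ + C k i s * C s j τ + C j k s * C s i τ)
              + (-(lam * ind p k i)) * (b (Sum.inl s) * C s j τ)
              + (lam * ind p j k) * (b (Sum.inl s) * C s i τ)) :=
            Finset.sum_congr rfl fun s _ => by
              linear_combination (b (Sum.inr s) * b (Sum.inr τ)) * ind_mul p k i s j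
        _ = 0 := by
            rw [Finset.sum_add_distrib, Finset.sum_add_distrib, ← Finset.mul_sum,
              ← Finset.mul_sum, ← Finset.mul_sum, jacC, casL, casL]
            ring
  have core3 : ∀ (i j k : Fin N) (τ : Fin N ⊕ Fin N),
      ∑ σ, (Kmat p C b lam (.inl i) (.inr j) σ * Kmat p C b lam σ (.inr k) τ
        + Kmat p C b lam (.inr k) (.inl i) σ * Kmat p C b lam σ (.inr j) τ
        + Kmat p C b lam (.inr j) (.inr k) σ * Kmat p C b lam σ (.inl i) τ) = 0 := by
    rintro i j k (τ | τ) <;> rw [Fintype.sum_sum_type] <;>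
      simp only [Kmat, zero_mul, mul_zero, add_zero, zero_add, Finset.sum_const_zero] <;>
      rw [← Finset.sum_add_distrib]
    · calc ∑ s, (((C i j s + b (Sum.inl s) * ind p i j) * (C s k τ + b (Sum.inl τ) * ind p s k)
            + (C k i s - b (Sum.inl s) * ind p k i) * (C s j τ + b (Sum.inl τ) * ind p s j))
            + C j k s * (C s i τ - b (Sum.inl τ) * ind p s i))
          = ∑ s, ((C i j s * C s k τ + C k i s * C s j τ + C j k s * C s i τ)
              + ind p i j * (b (Sum.inl s) * C s k τ)
              + (-(ind p k i)) * (b (Sum.inl s) * C s j τ)) :=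
            Finset.sum_congr rfl fun s _ => by
              linear_combination (b (Sum.inl τ)) * CE i j s k + (b (Sum.inl τ)) * CE k i s j
                + (-(b (Sum.inl τ))) * CE j k s i
                + (b (Sum.inl s) * b (Sum.inl τ)) * ind_mul p i j s k
        _ = 0 := by
            rw [Finset.sum_add_distrib, Finset.sum_add_distrib, ← Finset.mul_sum,
              ← Finset.mul_sum, jacC, casL, casL]
            ring
    · calc ∑ s, (((C i j s + b (Sum.inl s) * ind p i j) * (b (Sum.inr τ) * ind p s k)
            + (C k i s - b (Sum.inl s) * ind p k i) * (b (Sum.inr τ) * ind p s j))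
            + (b (Sum.inr s) * ind p i j * C s k τ + -(b (Sum.inr s) * ind p k i) * C s j τ
              + C j k s * -(b (Sum.inr τ) * ind p s i)))
          = ∑ s, (ind p i j * (b (Sum.inr s) * C s k τ)
              + (-(ind p k i)) * (b (Sum.inr s) * C s j τ)) :=
            Finset.sum_congr rfl fun s _ => by
              linear_combination (b (Sum.inr τ)) * CE i j s k + (b (Sum.inr τ)) * CE k i s j
                + (-(b (Sum.inr τ))) * CE j k s i
                + (b (Sum.inl s) * b (Sum.inr τ)) * ind_mul p i j s k
        _ = 0 := by
            rw [Finset.sum_add_distrib, ← Finset.mul_sum, ← Finset.mul_sum, casR, casR]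
            ring
  have core4 : ∀ (i j k : Fin N) (τ : Fin N ⊕ Fin N),
      ∑ σ, (Kmat p C b lam (.inr i) (.inr j) σ * Kmat p C b lam σ (.inr k) τ
        + Kmat p C b lam (.inr k) (.inr i) σ * Kmat p C b lam σ (.inr j) τ
        + Kmat p C b lam (.inr j) (.inr k) σ * Kmat p C b lam σ (.inr i) τ) = 0 := by
    rintro i j k (τ | τ) <;> rw [Fintype.sum_sum_type] <;>
      simp only [Kmat, zero_mul, mul_zero, add_zero, zero_add, Finset.sum_const_zero]
    exact jacC i j k τ
  rintro (i | i) (j | j) (k | k) τ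
  · exact core1 i j k τ
  · exact core2 i j k τ
  · rw [shift]; exact core2 k i j τ
  · exact core3 i j k τ
  · rw [shift, shift]; exact core2 j k i τ
  · rw [shift, shift]; exact core3 j k i τ
  · rw [shift]; exact core3 k i j τ
  · exact core4 i j k τ

lemma hK_fromBlocks (π : (Fin N → ℝ) → Matrix (Fin N) (Fin N) ℝ)
    (hC : ∀ x i j, π x i j = ∑ n, C i j n * x n)
    (g : ((Fin N ⊕ Fin N) → ℝ) → ℝ)
    (hg : ∀ z, g z = ∑ τ, b τ * z τ) :
    ∀ (z : (Fin N ⊕ Fin N) → ℝ) (i j : Fin N ⊕ Fin N),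
      Matrix.fromBlocks (lam • π (Yc z))
        (π (Xc z) + g z • Matrix.single p p (1 : ℝ))
        (π (Xc z) - g z • Matrix.single p p (1 : ℝ))
        (π (Yc z)) i j
      = ∑ τ, Kmat p C b lam i j τ * z τ := by
  rintro z (i | i) (j | j) <;> rw [Fintype.sum_sum_type] <;>
    simp only [Kmat, Matrix.fromBlocks_apply₁₁, Matrix.fromBlocks_apply₁₂,
      Matrix.fromBlocks_apply₂₁, Matrix.fromBlocks_apply₂₂, Matrix.add_apply, Matrix.sub_apply,
      Matrix.smul_apply, smul_eq_mul, stdBasis_eq_ind, hC, hg, zero_mul, Finset.sum_const_zero,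
      zero_add, add_zero, Xc, Yc, Fintype.sum_sum_type]
  · rw [Finset.mul_sum]
    exact Finset.sum_congr rfl fun n _ => by ring
  · rw [add_mul, Finset.sum_mul, Finset.sum_mul, ← add_assoc, ← Finset.sum_add_distrib]
    congr 1 <;> exact Finset.sum_congr rfl fun s _ => by ring
  · rw [add_mul, Finset.sum_mul, Finset.sum_mul, sub_add_eq_sub_sub, ← Finset.sum_sub_distrib,
      sub_eq_add_neg, ← Finset.sum_neg_distrib]
    congr 1 <;> exact Finset.sum_congr rfl fun s _ => by ring

end main

/-- for a linear Poisson tensor `π` independent of `x_p` and a linear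
Casimir `c`, both tensors `[[λπ(y), π(x)±c(x)E_pp],[…, π(y)]]` and
`[[λπ(y), π(x)±c(y)E_pp],[…, π(y)]]` are Poisson. -/
theorem stmt11 {N : ℕ} (hN : 1 ≤ N)
    (π : (Fin N → ℝ) → Matrix (Fin N) (Fin N) ℝ)
    (hπ : IsPoissonTensor π) (hlin : IsLinearTensor π)
    (p : Fin N) (hp : ∀ x i j, pd p (fun y => π y i j) x = 0)
    (c : (Fin N → ℝ) → ℝ) (hc : IsCasimir π c) (hclin : IsLinearFun c)
    (lam : ℝ) :
    IsPoissonTensor (fun z : (Fin N ⊕ Fin N) → ℝ =>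
      Matrix.fromBlocks
        (lam • π (Yc z))
        (π (Xc z) + c (Xc z) • Matrix.single p p (1 : ℝ))
        (π (Xc z) - c (Xc z) • Matrix.single p p (1 : ℝ))
        (π (Yc z))) ∧
    IsPoissonTensor (fun z : (Fin N ⊕ Fin N) → ℝ =>
      Matrix.fromBlocks
        (lam • π (Yc z))
        (π (Xc z) + c (Yc z) • Matrix.single p p (1 : ℝ))
        (π (Xc z) - c (Yc z) • Matrix.single p p (1 : ℝ))
        (π (Yc z))) := by
  obtain ⟨C, hC⟩ := hlin
  obtain ⟨a, ha⟩ := hclin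
  have pdπ : ∀ (s : Fin N) (x : Fin N → ℝ) i j, pd s (fun y => π y i j) x = C i j s := by
    intro s x i j
    have hfe : (fun y => π y i j) = fun y => ∑ n, C i j n * y n := funext fun y => hC y i j
    rw [hfe, pd_linear]
  have pdc : ∀ (s : Fin N) (x : Fin N → ℝ), pd s c x = a s := by
    intro s x
    have hfe : c = fun x => ∑ n, a n * x n := funext ha
    rw [hfe, pd_linear]
  have hCp : ∀ i j, C i j p = 0 := fun i j => by rw [← pdπ p 0 i j]; exact hp 0 i j
  have hCa : ∀ i j n, C j i n = - C i j n := by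
    intro i j n
    have h1 := hπ.2.1 (Pi.single n 1) i j
    simp only [hC] at h1
    rwa [sum_mul_single, sum_mul_single] at h1
  have jacC : ∀ i j k n, ∑ s, (C i j s * C s k n + C k i s * C s j n + C j k s * C s i n) = 0 := by
    intro i j k n
    have h1 := hπ.2.2 (Pi.single n 1) i j k
    simp only [pdπ] at h1
    simp only [hC, sum_mul_single] at h1
    exact h1
  have cas : ∀ j n, ∑ s, a s * C s j n = 0 := by
    intro j n
    have h1 := hc.2 (Pi.single n 1) j
    simp only [pdc] at h1
    simp only [hC, sum_mul_single] at h1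
    exact h1
  constructor
  · refine isPoisson_of_linear _ (Kmat p C (Sum.elim a fun _ => 0) lam)
      (hK_fromBlocks p C _ lam π hC (fun z => c (Xc z)) ?_)
      (Kmat_anti p C _ lam hCa)
      (Kmat_jac p C _ lam hCp jacC (fun j n => by simpa using cas j n) (fun j n => by simp))
    intro z
    show c (Xc z) = _
    rw [ha, Fintype.sum_sum_type]
    simp [Xc]
  · refine isPoisson_of_linear _ (Kmat p C (Sum.elim (fun _ => 0) a) lam)
      (hK_fromBlocks p C _ lam π hC (fun z => c (Yc z)) ?_)
      (Kmat_anti p C _ lam hCa)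
      (Kmat_jac p C _ lam hCp jacC (fun j n => by simp) (fun j n => by simpa using cas j n))
    intro z
    show c (Yc z) = _
    rw [ha, Fintype.sum_sum_type]
    simp [Yc]
end

section
/- Let π be a linear Poisson tensor on ℝ^N that does not depend on the variable x_p for some fixed 1 ≤ p ≤ N, let λ ≥ 0, let c be a linear Casimir function for π, and let c' be a Casimir function for π with ∂c'/∂x_p ≡ 0. Then the functions on ℝ^{2N} given by F₁(x,y) = c'(x − √λ·y) + c'(x + √λ·y) and F₂(x,y) = c'(x − √λ·y) − c'(x + √λ·y) are Casimir functions both for the Poisson tensor with blocks Π^{xx}=λπ(y), Π^{xy}=π(x)+c(x)E_pp, Π^{yx}=π(x)−c(x)E_pp, Π^{yy}=π(y), and for the Poisson tensor with the same blocks except c(y) replaces c(x). -/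
open scoped ContDiff

/-- The tensor `[[λπ(y), π(x)+c(x)E_pp],[π(x)−c(x)E_pp, π(y)]]` on `ℝ^{2N}`. -/
noncomputable def tensorTTX {N : ℕ} (π : (Fin N → ℝ) → Matrix (Fin N) (Fin N) ℝ)
    (p : Fin N) (c : (Fin N → ℝ) → ℝ) (lam : ℝ) (z : (Fin N ⊕ Fin N) → ℝ) :
    Matrix (Fin N ⊕ Fin N) (Fin N ⊕ Fin N) ℝ :=
  Matrix.fromBlocks
    (lam • π (Yc z))
    (π (Xc z) + c (Xc z) • Matrix.single p p (1 : ℝ))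
    (π (Xc z) - c (Xc z) • Matrix.single p p (1 : ℝ))
    (π (Yc z))

/-- The tensor `[[λπ(y), π(x)+c(y)E_pp],[π(x)−c(y)E_pp, π(y)]]` on `ℝ^{2N}`. -/
noncomputable def tensorTTY {N : ℕ} (π : (Fin N → ℝ) → Matrix (Fin N) (Fin N) ℝ)
    (p : Fin N) (c : (Fin N → ℝ) → ℝ) (lam : ℝ) (z : (Fin N ⊕ Fin N) → ℝ) :
    Matrix (Fin N ⊕ Fin N) (Fin N ⊕ Fin N) ℝ :=
  Matrix.fromBlocks
    (lam • π (Yc z))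
    (π (Xc z) + c (Yc z) • Matrix.single p p (1 : ℝ))
    (π (Xc z) - c (Yc z) • Matrix.single p p (1 : ℝ))
    (π (Yc z))

private lemma fderiv_comp_clm {E F : Type*} [NormedAddCommGroup E] [NormedSpace ℝ E]
    [NormedAddCommGroup F] [NormedSpace ℝ F] (f : F → ℝ) (hf : Differentiable ℝ f)
    (L : E →L[ℝ] F) (z : E) :
    fderiv ℝ (fun z => f (L z)) z = (fderiv ℝ f (L z)).comp L := by
  rw [show (fun z => f (L z)) = f ∘ L from rfl, fderiv_comp z (hf _) L.differentiableAt, L.fderiv]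

private lemma master {N : ℕ} (π : (Fin N → ℝ) → Matrix (Fin N) (Fin N) ℝ)
    (hlin : IsLinearTensor π) (p : Fin N) (lam μ : ℝ) (hμ : μ * μ = lam)
    (c' : (Fin N → ℝ) → ℝ) (hc' : IsCasimir π c')
    (hc'p : ∀ x, pd p c' x = 0)
    (d : ((Fin N ⊕ Fin N) → ℝ) → ℝ) (ε : ℝ) :
    IsCasimir (fun z => Matrix.fromBlocks (lam • π (Yc z))
        (π (Xc z) + d z • Matrix.single p p (1 : ℝ))
        (π (Xc z) - d z • Matrix.single p p (1 : ℝ))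
        (π (Yc z)))
      (fun z => c' (Xc z - μ • Yc z) + ε * c' (Xc z + μ • Yc z)) := by
  subst hμ
  have hd : Differentiable ℝ c' := hc'.1.differentiable (by simp)
  set Lm : ((Fin N ⊕ Fin N) → ℝ) →L[ℝ] (Fin N → ℝ) :=
    ContinuousLinearMap.pi fun i => ContinuousLinearMap.proj (Sum.inl i)
      - μ • ContinuousLinearMap.proj (Sum.inr i) with hLmdef
  set Lp : ((Fin N ⊕ Fin N) → ℝ) →L[ℝ] (Fin N → ℝ) :=
    ContinuousLinearMap.pi fun i => ContinuousLinearMap.proj (Sum.inl i)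
      + μ • ContinuousLinearMap.proj (Sum.inr i) with hLpdef
  have hLm : ∀ z, Xc z - μ • Yc z = Lm z := by
    intro z; funext i
    simp [hLmdef, Xc, Yc, ContinuousLinearMap.pi_apply, Pi.sub_apply, Pi.smul_apply]
  have hLp : ∀ z, Xc z + μ • Yc z = Lp z := by
    intro z; funext i
    simp [hLpdef, Xc, Yc, ContinuousLinearMap.pi_apply, Pi.add_apply, Pi.smul_apply]
  have hLmXs : ∀ s : Fin N, Lm (Pi.single (Sum.inl s) 1) = Pi.single s 1 := by
    intro s; funext j
    simp [hLmdef, ContinuousLinearMap.pi_apply, Pi.single_apply, Sum.inl.injEq]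
  have hLpXs : ∀ s : Fin N, Lp (Pi.single (Sum.inl s) 1) = Pi.single s 1 := by
    intro s; funext j
    simp [hLpdef, ContinuousLinearMap.pi_apply, Pi.single_apply, Sum.inl.injEq]
  have hLmYs : ∀ s : Fin N, Lm (Pi.single (Sum.inr s) 1) = (-μ) • (Pi.single s 1 : Fin N → ℝ) := by
    intro s; funext j
    simp [hLmdef, ContinuousLinearMap.pi_apply, Pi.single_apply, Sum.inr.injEq]
    split_ifs <;> ring
  have hLpYs : ∀ s : Fin N, Lp (Pi.single (Sum.inr s) 1) = μ • (Pi.single s 1 : Fin N → ℝ) := by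
    intro s; funext j
    simp [hLpdef, ContinuousLinearMap.pi_apply, Pi.single_apply, Sum.inr.injEq]
  have hpd : ∀ (s : Fin N ⊕ Fin N) z,
      pd s (fun z => c' (Xc z - μ • Yc z) + ε * c' (Xc z + μ • Yc z)) z
        = (fderiv ℝ c' (Lm z)) (Lm (Pi.single s 1))
          + ε * ((fderiv ℝ c' (Lp z)) (Lp (Pi.single s 1))) := by
    intro s z
    have h1 : DifferentiableAt ℝ (fun z => c' (Lm z)) z :=
      (hd (Lm z)).comp z Lm.differentiableAt
    have h2 : DifferentiableAt ℝ (fun z => c' (Lp z)) z :=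
      (hd (Lp z)).comp z Lp.differentiableAt
    unfold pd
    simp only [hLm, hLp]
    rw [fderiv_fun_add h1 (h2.const_mul ε), fderiv_const_mul h2 ε,
      fderiv_comp_clm c' hd Lm z, fderiv_comp_clm c' hd Lp z]
    simp [ContinuousLinearMap.comp_apply]
  have hX : ∀ (s : Fin N) z,
      pd (Sum.inl s) (fun z => c' (Xc z - μ • Yc z) + ε * c' (Xc z + μ • Yc z)) z
        = pd s c' (Lm z) + ε * pd s c' (Lp z) := by
    intro s z; rw [hpd, hLmXs, hLpXs]; rfl
  have hY : ∀ (s : Fin N) z,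
      pd (Sum.inr s) (fun z => c' (Xc z - μ • Yc z) + ε * c' (Xc z + μ • Yc z)) z
        = -μ * pd s c' (Lm z) + ε * (μ * pd s c' (Lp z)) := by
    intro s z; rw [hpd, hLmYs, hLpYs]
    simp only [map_smul, smul_eq_mul]
    unfold pd; ring
  obtain ⟨C, hC⟩ := hlin
  have hπm : ∀ z (s j : Fin N), π (Lm z) s j = π (Xc z) s j - μ * π (Yc z) s j := by
    intro z s j
    rw [← hLm]
    simp only [hC]
    rw [Finset.mul_sum, ← Finset.sum_sub_distrib]
    refine Finset.sum_congr rfl fun n _ => ?_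
    simp only [Pi.sub_apply, Pi.smul_apply, smul_eq_mul]
    ring
  have hπp : ∀ z (s j : Fin N), π (Lp z) s j = π (Xc z) s j + μ * π (Yc z) s j := by
    intro z s j
    rw [← hLp]
    simp only [hC]
    rw [Finset.mul_sum, ← Finset.sum_add_distrib]
    refine Finset.sum_congr rfl fun n _ => ?_
    simp only [Pi.add_apply, Pi.smul_apply, smul_eq_mul]
    ring
  have hCasM : ∀ z (j : Fin N),
      ∑ s, pd s c' (Lm z) * (π (Xc z) s j - μ * π (Yc z) s j) = 0 := by
    intro z j
    simp only [← hπm]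
    exact hc'.2 (Lm z) j
  have hCasP : ∀ z (j : Fin N),
      ∑ s, pd s c' (Lp z) * (π (Xc z) s j + μ * π (Yc z) s j) = 0 := by
    intro z j
    simp only [← hπp]
    exact hc'.2 (Lp z) j
  constructor
  · simp only [hLm, hLp]
    exact (hc'.1.comp Lm.contDiff).add (contDiff_const.mul (hc'.1.comp Lp.contDiff))
  · intro z j
    rw [Fintype.sum_sum_type]
    obtain j | j := j
    · simp only [hX, hY, Matrix.fromBlocks_apply₁₁, Matrix.fromBlocks_apply₂₁,
        Matrix.smul_apply, smul_eq_mul, Matrix.sub_apply, Matrix.single,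
        Matrix.of_apply]
      rw [← Finset.sum_add_distrib]
      have hterm : ∀ s ∈ Finset.univ, (pd s c' (Lm z) + ε * pd s c' (Lp z))
              * (μ * μ * π (Yc z) s j)
            + (-μ * pd s c' (Lm z) + ε * (μ * pd s c' (Lp z)))
              * (π (Xc z) s j - d z * (if p = s ∧ p = j then (1:ℝ) else 0))
          = (-μ) * (pd s c' (Lm z) * (π (Xc z) s j - μ * π (Yc z) s j))
            + (ε * μ) * (pd s c' (Lp z) * (π (Xc z) s j + μ * π (Yc z) s j))
            + (if p = s then
                (if p = j then
                  (-μ * pd s c' (Lm z) + ε * (μ * pd s c' (Lp z))) * (-(d z))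
                else 0) else 0) := by
        intro s _
        split_ifs <;> first | ring1 | tauto
      rw [Finset.sum_congr rfl hterm, Finset.sum_add_distrib, Finset.sum_add_distrib,
        ← Finset.mul_sum, ← Finset.mul_sum, hCasM z j, hCasP z j, Finset.sum_ite_eq]
      simp [hc'p (Lm z), hc'p (Lp z)]
    · simp only [hX, hY, Matrix.fromBlocks_apply₁₂, Matrix.fromBlocks_apply₂₂,
        Matrix.add_apply, Matrix.smul_apply, smul_eq_mul, Matrix.single,
        Matrix.of_apply]
      rw [← Finset.sum_add_distrib]
      have hterm : ∀ s ∈ Finset.univ, (pd s c' (Lm z) + ε * pd s c' (Lp z))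
              * (π (Xc z) s j + d z * (if p = s ∧ p = j then (1:ℝ) else 0))
            + (-μ * pd s c' (Lm z) + ε * (μ * pd s c' (Lp z))) * π (Yc z) s j
          = pd s c' (Lm z) * (π (Xc z) s j - μ * π (Yc z) s j)
            + ε * (pd s c' (Lp z) * (π (Xc z) s j + μ * π (Yc z) s j))
            + (if p = s then
                (if p = j then
                  (pd s c' (Lm z) + ε * pd s c' (Lp z)) * d z
                else 0) else 0) := by
        intro s _
        split_ifs <;> first | ring1 | tauto
      rw [Finset.sum_congr rfl hterm, Finset.sum_add_distrib, Finset.sum_add_distrib,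
        ← Finset.mul_sum, hCasM z j, hCasP z j, Finset.sum_ite_eq]
      simp [hc'p (Lm z), hc'p (Lp z)]

/-- `F₁(x,y) = c'(x−√λ y) + c'(x+√λ y)` and
`F₂(x,y) = c'(x−√λ y) − c'(x+√λ y)` are Casimir functions for both tensors
`[[λπ(y), π(x)±c(x)E_pp],[…, π(y)]]` and `[[λπ(y), π(x)±c(y)E_pp],[…, π(y)]]`. -/
theorem stmt13 {N : ℕ} (hN : 1 ≤ N)
    (π : (Fin N → ℝ) → Matrix (Fin N) (Fin N) ℝ)
    (hπ : IsPoissonTensor π) (hlin : IsLinearTensor π)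
    (p : Fin N) (hp : ∀ x i j, pd p (fun y => π y i j) x = 0)
    (lam : ℝ) (hlam : 0 ≤ lam)
    (c : (Fin N → ℝ) → ℝ) (hc : IsCasimir π c) (hclin : IsLinearFun c)
    (c' : (Fin N → ℝ) → ℝ) (hc' : IsCasimir π c')
    (hc'p : ∀ x, pd p c' x = 0) :
    IsCasimir (tensorTTX π p c lam)
      (fun z => c' (Xc z - Real.sqrt lam • Yc z) + c' (Xc z + Real.sqrt lam • Yc z)) ∧
    IsCasimir (tensorTTX π p c lam)
      (fun z => c' (Xc z - Real.sqrt lam • Yc z) - c' (Xc z + Real.sqrt lam • Yc z)) ∧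
    IsCasimir (tensorTTY π p c lam)
      (fun z => c' (Xc z - Real.sqrt lam • Yc z) + c' (Xc z + Real.sqrt lam • Yc z)) ∧
    IsCasimir (tensorTTY π p c lam)
      (fun z => c' (Xc z - Real.sqrt lam • Yc z) - c' (Xc z + Real.sqrt lam • Yc z)) := by
  have hμ : Real.sqrt lam * Real.sqrt lam = lam := Real.mul_self_sqrt hlam
  have hFadd : (fun z : (Fin N ⊕ Fin N) → ℝ =>
        c' (Xc z - Real.sqrt lam • Yc z) + c' (Xc z + Real.sqrt lam • Yc z))
      = (fun z => c' (Xc z - Real.sqrt lam • Yc z)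
          + (1 : ℝ) * c' (Xc z + Real.sqrt lam • Yc z)) := by
    funext z; ring
  have hFsub : (fun z : (Fin N ⊕ Fin N) → ℝ =>
        c' (Xc z - Real.sqrt lam • Yc z) - c' (Xc z + Real.sqrt lam • Yc z))
      = (fun z => c' (Xc z - Real.sqrt lam • Yc z)
          + (-1 : ℝ) * c' (Xc z + Real.sqrt lam • Yc z)) := by
    funext z; ring
  refine ⟨?_, ?_, ?_, ?_⟩
  · rw [hFadd]
    exact master π hlin p lam (Real.sqrt lam) hμ c' hc' hc'p (fun z => c (Xc z)) 1
  · rw [hFsub]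
    exact master π hlin p lam (Real.sqrt lam) hμ c' hc' hc'p (fun z => c (Xc z)) (-1)
  · rw [hFadd]
    exact master π hlin p lam (Real.sqrt lam) hμ c' hc' hc'p (fun z => c (Yc z)) 1
  · rw [hFsub]
    exact master π hlin p lam (Real.sqrt lam) hμ c' hc' hc'p (fun z => c (Yc z)) (-1)
end

section
/- Let π₁ and π₂ be compatible linear Poisson tensors on ℝ^N, both not depending on the variable x_p for some fixed 1 ≤ p ≤ N, and let c be a Casimir function for π₂. Then for all λ, ε ∈ ℝ the 2N×2N matrix field on ℝ^{2N} with blocks Π^{xx}(x,y) = ε·π₂(x), Π^{xy}(x,y) = π₂(x) + c(x)·E_pp, Π^{yx}(x,y) = π₂(x) − c(x)·E_pp, Π^{yy}(x,y) = ∑_{s=1}^N (∂π₂/∂x_s)(x) y_s + λ·π₁(x) − λε·π₁(y) is a Poisson tensor on ℝ^{2N}. -/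
open scoped ContDiff

lemma pd_linear_s14 {ι : Type} [Fintype ι] [DecidableEq ι] (C : ι → ℝ) (s : ι) (x : ι → ℝ) :
    pd s (fun y => ∑ n, C n * y n) x = C s := by
  have h : (fun y : ι → ℝ => ∑ n, C n * y n)
      = ⇑(∑ n, C n • (ContinuousLinearMap.proj n : (ι → ℝ) →L[ℝ] ℝ)) := by
    funext y
    simp [ContinuousLinearMap.sum_apply, ContinuousLinearMap.proj_apply]
  rw [pd, h, ContinuousLinearMap.fderiv]
  simp [ContinuousLinearMap.sum_apply, ContinuousLinearMap.proj_apply, Pi.single_apply,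
    Finset.sum_ite_eq', mul_comm]

noncomputable def XL (N : ℕ) : ((Fin N ⊕ Fin N) → ℝ) →L[ℝ] (Fin N → ℝ) :=
  ContinuousLinearMap.pi fun i => ContinuousLinearMap.proj (Sum.inl i)

lemma XL_single_inl {N : ℕ} (n : Fin N) : XL N (Pi.single (Sum.inl n) 1) = Pi.single n 1 := by
  funext i
  simp [XL, Pi.single_apply, Sum.inl.injEq]

lemma XL_single_inr {N : ℕ} (n : Fin N) : XL N (Pi.single (Sum.inr n) 1) = 0 := by
  funext i
  simp [XL, Pi.single_apply]

lemma pd_comp_Xc {N : ℕ} (f : (Fin N → ℝ) → ℝ) (hf : Differentiable ℝ f)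
    (S : Fin N ⊕ Fin N) (z : (Fin N ⊕ Fin N) → ℝ) :
    pd S (fun w => f (Xc w)) z = Sum.elim (fun n => pd n f (Xc z)) (fun _ => 0) S := by
  have h : (fun w : (Fin N ⊕ Fin N) → ℝ => f (Xc w)) = f ∘ (XL N) := rfl
  rw [pd, h, fderiv_comp _ (hf _) (XL N).differentiableAt, (XL N).fderiv]
  cases S with
  | inl n => rw [ContinuousLinearMap.comp_apply, XL_single_inl]; rfl
  | inr n => rw [ContinuousLinearMap.comp_apply, XL_single_inr, map_zero]; rfl

lemma pd_add_mul_const {ι : Type} [Fintype ι] [DecidableEq ι]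
    (f g : (ι → ℝ) → ℝ) (hf : Differentiable ℝ f) (hg : Differentiable ℝ g)
    (e : ℝ) (S : ι) (z : ι → ℝ) :
    pd S (fun w => f w + g w * e) z = pd S f z + pd S g z * e := by
  unfold pd
  rw [fderiv_fun_add (hf z) ((hg z).mul_const e)]
  rw [fderiv_mul_const (hg z)]
  simp [mul_comm]

lemma diff_linear {ι : Type} [Fintype ι] [DecidableEq ι] (K : ι → ℝ) :
    Differentiable ℝ (fun w : ι → ℝ => ∑ T, K T * w T) := by
  have h : (fun y : ι → ℝ => ∑ n, K n * y n)
      = ⇑(∑ n, K n • (ContinuousLinearMap.proj n : (ι → ℝ) →L[ℝ] ℝ)) := by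
    funext y
    simp [ContinuousLinearMap.sum_apply, ContinuousLinearMap.proj_apply]
  rw [h]; exact (_ : _ →L[ℝ] ℝ).differentiable

lemma pd_master {N : ℕ} (c : (Fin N → ℝ) → ℝ) (hc : Differentiable ℝ c)
    (K : (Fin N ⊕ Fin N) → ℝ) (e : ℝ) (S : Fin N ⊕ Fin N) (z : (Fin N ⊕ Fin N) → ℝ) :
    pd S (fun w => (∑ T, K T * w T) + c (Xc w) * e) z
      = K S + (Sum.elim (fun n => pd n c (Xc z)) (fun _ => 0) S) * e := by
  have hg : Differentiable ℝ (fun w : (Fin N ⊕ Fin N) → ℝ => c (Xc w)) :=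
    hc.comp (XL N).differentiable
  rw [pd_add_mul_const (fun w => ∑ T, K T * w T) (fun w => c (Xc w)) (diff_linear K) hg e,
    pd_linear_s14, pd_comp_Xc _ hc]

lemma pd_master2 {N : ℕ} (c : (Fin N → ℝ) → ℝ) (hc : Differentiable ℝ c)
    (A B : Fin N → ℝ) (e : ℝ) (S : Fin N ⊕ Fin N) (z : (Fin N ⊕ Fin N) → ℝ) :
    pd S (fun w => ((∑ n, A n * Xc w n) + ∑ n, B n * Yc w n) + c (Xc w) * e) z
      = Sum.elim A B S + Sum.elim (fun n => pd n c (Xc z)) (fun _ => 0) S * e := by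
  have h : (fun w : (Fin N ⊕ Fin N) → ℝ => ((∑ n, A n * Xc w n) + ∑ n, B n * Yc w n) + c (Xc w) * e)
      = fun w => (∑ T, Sum.elim A B T * w T) + c (Xc w) * e := by
    funext w
    rw [Fintype.sum_sum_type]
    rfl
  rw [h, pd_master c hc]

lemma sum_mul_stdE {N : ℕ} (p : Fin N) (f : Fin N → ℝ) (k : Fin N) :
    ∑ n, f n * Matrix.single p p (1:ℝ) n k
      = f p * Matrix.single p p (1:ℝ) p k := by
  rw [Finset.sum_eq_single p]
  · intro b _ hb; simp [Matrix.single, Ne.symm hb]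
  · simp

lemma stdE_split {N : ℕ} (p a b : Fin N) :
    Matrix.single p p (1:ℝ) a b
      = (if a = p then (1:ℝ) else 0) * (if b = p then (1:ℝ) else 0) := by
  by_cases ha : a = p <;> by_cases hb : b = p <;>
    simp [Matrix.single, ha, hb] <;> tauto

lemma stdE_symm {N : ℕ} (p a b : Fin N) :
    Matrix.single p p (1:ℝ) a b = Matrix.single p p (1:ℝ) b a := by
  simp [Matrix.single, and_comm]

/-- for compatible linear Poisson tensors `π₁, π₂` independent of `x_p`
and a Casimir `c` of `π₂`, the tensor with blocks `[[επ₂(x), π₂(x)+c(x)E_pp],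
[π₂(x)−c(x)E_pp, ∑_s (∂π₂/∂x_s)(x) y_s + λπ₁(x) − λε π₁(y)]]` is Poisson. -/
theorem stmt14 {N : ℕ} (hN : 1 ≤ N)
    (π₁ π₂ : (Fin N → ℝ) → Matrix (Fin N) (Fin N) ℝ)
    (hπ₁ : IsPoissonTensor π₁) (hπ₂ : IsPoissonTensor π₂)
    (hlin₁ : IsLinearTensor π₁) (hlin₂ : IsLinearTensor π₂)
    (hcomp : IsPoissonTensor (fun x => π₁ x + π₂ x))
    (p : Fin N)
    (hp₁ : ∀ x i j, pd p (fun y => π₁ y i j) x = 0)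
    (hp₂ : ∀ x i j, pd p (fun y => π₂ y i j) x = 0)
    (c : (Fin N → ℝ) → ℝ) (hc : IsCasimir π₂ c)
    (lam eps : ℝ) :
    IsPoissonTensor (fun z : (Fin N ⊕ Fin N) → ℝ =>
      Matrix.fromBlocks
        (eps • π₂ (Xc z))
        (π₂ (Xc z) + c (Xc z) • Matrix.single p p (1 : ℝ))
        (π₂ (Xc z) - c (Xc z) • Matrix.single p p (1 : ℝ))
        (∑ s, Yc z s • pdMat s π₂ (Xc z) + lam • π₁ (Xc z) - (lam * eps) • π₁ (Yc z))) := by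
  obtain ⟨C1, hC1⟩ := hlin₁
  obtain ⟨C2, hC2⟩ := hlin₂
  have pdc : Differentiable ℝ c := hc.1.differentiable (by norm_num)
  have hd2 : ∀ (x : Fin N → ℝ) (i j : Fin N) (s : Fin N),
      pd s (fun y => π₂ y i j) x = C2 i j s := by
    intro x i j s; simp only [hC2]; exact pd_linear_s14 _ _ _
  have hd1 : ∀ (x : Fin N → ℝ) (i j : Fin N) (s : Fin N),
      pd s (fun y => π₁ y i j) x = C1 i j s := by
    intro x i j s; simp only [hC1]; exact pd_linear_s14 _ _ _
  have hpdMat : ∀ (s : Fin N) (x : Fin N → ℝ) (i j : Fin N),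
      pdMat s π₂ x i j = C2 i j s := fun s x i j => hd2 x i j s
  have hC2p : ∀ i j, C2 i j p = 0 := by
    intro i j; rw [← hd2 0 i j p]; exact hp₂ 0 i j
  have hC1p : ∀ i j, C1 i j p = 0 := by
    intro i j; rw [← hd1 0 i j p]; exact hp₁ 0 i j
  have hsum2 : ∀ (v : Fin N → ℝ) (i j : Fin N), ∑ s, v s * C2 i j s = π₂ v i j := by
    intro v i j; rw [hC2]; exact Finset.sum_congr rfl fun n _ => mul_comm _ _
  have hJ2 : ∀ (x : Fin N → ℝ) (i j k : Fin N),
      ∑ s, (C2 i j s * π₂ x s k + C2 k i s * π₂ x s j + C2 j k s * π₂ x s i) = 0 := by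
    intro x i j k
    have h := hπ₂.2.2 x i j k
    simpa only [hd2] using h
  have hJ1 : ∀ (x : Fin N → ℝ) (i j k : Fin N),
      ∑ s, (C1 i j s * π₁ x s k + C1 k i s * π₁ x s j + C1 j k s * π₁ x s i) = 0 := by
    intro x i j k
    have h := hπ₁.2.2 x i j k
    simpa only [hd1] using h
  have hd12 : ∀ (x : Fin N → ℝ) (i j : Fin N) (s : Fin N),
      pd s (fun y => π₁ y i j + π₂ y i j) x = C1 i j s + C2 i j s := by
    intro x i j s
    have h : (fun y : Fin N → ℝ => π₁ y i j + π₂ y i j)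
        = fun y => ∑ n, (C1 i j n + C2 i j n) * y n := by
      funext y
      rw [hC1, hC2, ← Finset.sum_add_distrib]
      exact Finset.sum_congr rfl fun n _ => by ring
    rw [h]; exact pd_linear_s14 _ _ _
  have hM : ∀ (x : Fin N → ℝ) (i j k : Fin N),
      ∑ s, (C1 i j s * π₂ x s k + C2 i j s * π₁ x s k
        + C1 k i s * π₂ x s j + C2 k i s * π₁ x s j
        + C1 j k s * π₂ x s i + C2 j k s * π₁ x s i) = 0 := by
    intro x i j k
    have h := hcomp.2.2 x i j k
    simp only [Matrix.add_apply, hd12] at h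
    have key : ∀ s : Fin N,
        (C1 i j s + C2 i j s) * (π₁ x s k + π₂ x s k)
          + (C1 k i s + C2 k i s) * (π₁ x s j + π₂ x s j)
          + (C1 j k s + C2 j k s) * (π₁ x s i + π₂ x s i)
        = (C1 i j s * π₂ x s k + C2 i j s * π₁ x s k
            + C1 k i s * π₂ x s j + C2 k i s * π₁ x s j
            + C1 j k s * π₂ x s i + C2 j k s * π₁ x s i)
          + (C1 i j s * π₁ x s k + C1 k i s * π₁ x s j + C1 j k s * π₁ x s i)
          + (C2 i j s * π₂ x s k + C2 k i s * π₂ x s j + C2 j k s * π₂ x s i) :=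
      fun s => by ring
    simp only [key] at h
    rw [Finset.sum_add_distrib, Finset.sum_add_distrib, hJ1 x i j k, hJ2 x i j k] at h
    simpa using h
  have hCas : ∀ (x : Fin N → ℝ) (j : Fin N), ∑ s, pd s c x * π₂ x s j = 0 := hc.2
  -- pd lemmas for the four entry types
  have pd11 : ∀ (i j : Fin N) (S : Fin N ⊕ Fin N) (z : (Fin N ⊕ Fin N) → ℝ),
      pd S (fun w => eps * π₂ (Xc w) i j) z
        = Sum.elim (fun n => eps * C2 i j n) (fun _ => (0:ℝ)) S := by
    intro i j S z
    have h : (fun w : (Fin N ⊕ Fin N) → ℝ => eps * π₂ (Xc w) i j)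
        = fun w => ((∑ n, (eps * C2 i j n) * Xc w n) + ∑ n, (0:ℝ) * Yc w n) + c (Xc w) * 0 := by
      funext w
      simp only [hC2, Finset.mul_sum, zero_mul, Finset.sum_const_zero, add_zero, mul_zero,
        mul_assoc]
    rw [h, pd_master2 c pdc, mul_zero, add_zero]
  have pd12 : ∀ (i j : Fin N) (S : Fin N ⊕ Fin N) (z : (Fin N ⊕ Fin N) → ℝ),
      pd S (fun w => π₂ (Xc w) i j + c (Xc w) * Matrix.single p p (1:ℝ) i j) z
        = Sum.elim (fun n => C2 i j n) (fun _ => (0:ℝ)) S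
          + Sum.elim (fun n => pd n c (Xc z)) (fun _ => (0:ℝ)) S
            * Matrix.single p p (1:ℝ) i j := by
    intro i j S z
    have h : (fun w : (Fin N ⊕ Fin N) → ℝ =>
          π₂ (Xc w) i j + c (Xc w) * Matrix.single p p (1:ℝ) i j)
        = fun w => ((∑ n, C2 i j n * Xc w n) + ∑ n, (0:ℝ) * Yc w n)
            + c (Xc w) * Matrix.single p p (1:ℝ) i j := by
      funext w
      simp only [hC2, zero_mul, Finset.sum_const_zero, add_zero]
    rw [h, pd_master2 c pdc]
  have pd21 : ∀ (i j : Fin N) (S : Fin N ⊕ Fin N) (z : (Fin N ⊕ Fin N) → ℝ),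
      pd S (fun w => π₂ (Xc w) i j - c (Xc w) * Matrix.single p p (1:ℝ) i j) z
        = Sum.elim (fun n => C2 i j n) (fun _ => (0:ℝ)) S
          - Sum.elim (fun n => pd n c (Xc z)) (fun _ => (0:ℝ)) S
            * Matrix.single p p (1:ℝ) i j := by
    intro i j S z
    have h : (fun w : (Fin N ⊕ Fin N) → ℝ =>
          π₂ (Xc w) i j - c (Xc w) * Matrix.single p p (1:ℝ) i j)
        = fun w => ((∑ n, C2 i j n * Xc w n) + ∑ n, (0:ℝ) * Yc w n)
            + c (Xc w) * (-(Matrix.single p p (1:ℝ) i j)) := by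
      funext w
      simp only [hC2, zero_mul, Finset.sum_const_zero, add_zero]
      ring
    rw [h, pd_master2 c pdc]
    ring
  have pd22 : ∀ (i j : Fin N) (S : Fin N ⊕ Fin N) (z : (Fin N ⊕ Fin N) → ℝ),
      pd S (fun w => π₂ (Yc w) i j + lam * π₁ (Xc w) i j - lam * eps * π₁ (Yc w) i j) z
        = Sum.elim (fun n => lam * C1 i j n)
            (fun n => C2 i j n - lam * eps * C1 i j n) S := by
    intro i j S z
    have h : (fun w : (Fin N ⊕ Fin N) → ℝ =>
          π₂ (Yc w) i j + lam * π₁ (Xc w) i j - lam * eps * π₁ (Yc w) i j)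
        = fun w => ((∑ n, (lam * C1 i j n) * Xc w n)
            + ∑ n, (C2 i j n - lam * eps * C1 i j n) * Yc w n) + c (Xc w) * 0 := by
      funext w
      simp only [hC1, hC2, Finset.mul_sum, sub_mul, Finset.sum_sub_distrib, mul_zero, add_zero,
        ← mul_assoc]
      ring
    rw [h, pd_master2 c pdc, mul_zero, add_zero]
  refine ⟨?_, ?_, ?_⟩
  · -- smoothness
    have hXc : ContDiff ℝ ∞ (Xc (N := N)) := (XL N).contDiff
    have hYc : ContDiff ℝ ∞ (Yc (N := N)) := by
      apply contDiff_pi.mpr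
      intro i
      exact (ContinuousLinearMap.proj (R := ℝ) (φ := fun _ : Fin N ⊕ Fin N => ℝ)
        (Sum.inr i)).contDiff
    intro I J
    rcases I with i | i <;> rcases J with j | j <;>
      simp only [Matrix.fromBlocks_apply₁₁, Matrix.fromBlocks_apply₁₂,
        Matrix.fromBlocks_apply₂₁, Matrix.fromBlocks_apply₂₂, Matrix.add_apply,
        Matrix.sub_apply, Matrix.smul_apply, Matrix.sum_apply, smul_eq_mul, hpdMat, hsum2]
    · exact contDiff_const.mul ((hπ₂.1 i j).comp hXc)
    · exact ((hπ₂.1 i j).comp hXc).add ((hc.1.comp hXc).mul contDiff_const)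
    · exact ((hπ₂.1 i j).comp hXc).sub ((hc.1.comp hXc).mul contDiff_const)
    · exact (((hπ₂.1 i j).comp hYc).add (contDiff_const.mul ((hπ₁.1 i j).comp hXc))).sub
        (contDiff_const.mul ((hπ₁.1 i j).comp hYc))
  · -- antisymmetry
    intro z I J
    rcases I with i | i <;> rcases J with j | j <;>
      simp only [Matrix.fromBlocks_apply₁₁, Matrix.fromBlocks_apply₁₂,
        Matrix.fromBlocks_apply₂₁, Matrix.fromBlocks_apply₂₂, Matrix.add_apply,
        Matrix.sub_apply, Matrix.smul_apply, Matrix.sum_apply, smul_eq_mul, hpdMat, hsum2]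
    · rw [hπ₂.2.1 (Xc z) i j]; ring
    · rw [hπ₂.2.1 (Xc z) i j, stdE_symm p j i]; ring
    · rw [hπ₂.2.1 (Xc z) i j, stdE_symm p j i]; ring
    · rw [hπ₂.2.1 (Yc z) i j, hπ₁.2.1 (Xc z) i j, hπ₁.2.1 (Yc z) i j]; ring
  · -- Jacobi
    intro z I J K
    rcases I with i | i <;> rcases J with j | j <;> rcases K with k | k <;>
      simp only [Matrix.fromBlocks_apply₁₁, Matrix.fromBlocks_apply₁₂,
        Matrix.fromBlocks_apply₂₁, Matrix.fromBlocks_apply₂₂, Matrix.add_apply,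
        Matrix.sub_apply, Matrix.smul_apply, Matrix.sum_apply, smul_eq_mul, hpdMat, hsum2,
        pd11, pd12, pd21, pd22, Fintype.sum_sum_type, Sum.elim_inl, Sum.elim_inr,
        zero_mul, mul_zero, add_zero, zero_add, sub_zero, Finset.sum_const_zero]
    case inl.inl.inl =>
      trans ((eps * eps) * (∑ n, (C2 i j n * π₂ (Xc z) n k + C2 k i n * π₂ (Xc z) n j + C2 j k n * π₂ (Xc z) n i)))
      · simp only [Finset.mul_sum, ← Finset.sum_add_distrib, ← Finset.sum_sub_distrib]
        exact Finset.sum_congr rfl fun n _ => by ring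
      · rw [hJ2 (Xc z) i j k]; ring
    case inl.inl.inr =>
      trans (eps * (∑ n, (C2 i j n * π₂ (Xc z) n k + C2 k i n * π₂ (Xc z) n j + C2 j k n * π₂ (Xc z) n i)) + (eps * c (Xc z)) * (∑ n, (C2 i j) n * Matrix.single p p 1 n k) - (eps * Matrix.single p p 1 k i) * (∑ n, pd n c (Xc z) * π₂ (Xc z) n j) + (eps * Matrix.single p p 1 j k) * (∑ n, pd n c (Xc z) * π₂ (Xc z) n i))
      · simp only [Finset.mul_sum, ← Finset.sum_add_distrib, ← Finset.sum_sub_distrib]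
        exact Finset.sum_congr rfl fun n _ => by ring
      · rw [hJ2 (Xc z) i j k, hCas (Xc z) j, hCas (Xc z) i]
        simp only [sum_mul_stdE]
        by_cases hip : i = p <;> by_cases hjp : j = p <;> by_cases hkp : k = p <;>
          simp [hip, hjp, hkp, hC2p, hC1p, stdE_split] <;> try ring
    case inl.inr.inl =>
      trans (eps * (∑ n, (C2 i j n * π₂ (Xc z) n k + C2 k i n * π₂ (Xc z) n j + C2 j k n * π₂ (Xc z) n i)) + (eps * Matrix.single p p 1 i j) * (∑ n, pd n c (Xc z) * π₂ (Xc z) n k) + (eps * c (Xc z)) * (∑ n, (C2 k i) n * Matrix.single p p 1 n j) - (eps * Matrix.single p p 1 j k) * (∑ n, pd n c (Xc z) * π₂ (Xc z) n i))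
      · simp only [Finset.mul_sum, ← Finset.sum_add_distrib, ← Finset.sum_sub_distrib]
        exact Finset.sum_congr rfl fun n _ => by ring
      · rw [hJ2 (Xc z) i j k, hCas (Xc z) k, hCas (Xc z) i]
        simp only [sum_mul_stdE]
        by_cases hip : i = p <;> by_cases hjp : j = p <;> by_cases hkp : k = p <;>
          simp [hip, hjp, hkp, hC2p, hC1p, stdE_split] <;> try ring
    case inl.inr.inr =>
      trans ((∑ n, (C2 i j n * π₂ (Xc z) n k + C2 k i n * π₂ (Xc z) n j + C2 j k n * π₂ (Xc z) n i)) + c (Xc z) * (∑ n, (C2 i j) n * Matrix.single p p 1 n k) + c (Xc z) * (∑ n, (C2 k i) n * Matrix.single p p 1 n j) - c (Xc z) * (∑ n, (C2 j k) n * Matrix.single p p 1 n i) + Matrix.single p p 1 i j * (∑ n, pd n c (Xc z) * π₂ (Xc z) n k) - Matrix.single p p 1 k i * (∑ n, pd n c (Xc z) * π₂ (Xc z) n j) + (c (Xc z) * Matrix.single p p 1 i j) * (∑ n, pd n c (Xc z) * Matrix.single p p 1 n k) - (c (Xc z) * Matrix.single p p 1 k i) * (∑ n, pd n c (Xc z)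 * Matrix.single p p 1 n j) + (lam * eps * c (Xc z)) * (∑ n, (C1 j k) n * Matrix.single p p 1 n i))
      · simp only [Finset.mul_sum, ← Finset.sum_add_distrib, ← Finset.sum_sub_distrib]
        exact Finset.sum_congr rfl fun n _ => by ring
      · rw [hJ2 (Xc z) i j k, hCas (Xc z) k, hCas (Xc z) j]
        simp only [sum_mul_stdE]
        by_cases hip : i = p <;> by_cases hjp : j = p <;> by_cases hkp : k = p <;>
          simp [hip, hjp, hkp, hC2p, hC1p, stdE_split] <;> try ring
    case inr.inl.inl =>
      trans (eps * (∑ n, (C2 i j n * π₂ (Xc z) n k + C2 k i n * π₂ (Xc z) n j + C2 j k n * π₂ (Xc z) n i)) - (eps * Matrix.single p p 1 i j) * (∑ n, pd n c (Xc z) * π₂ (Xc z) n k) + (eps * Matrix.single p p 1 k i) * (∑ n, pd n c (Xc z) * π₂ (Xc z) n j) + (eps * c (Xc z)) * (∑ n, (C2 j k) n * Matrix.single p p 1 n i))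
      · simp only [Finset.mul_sum, ← Finset.sum_add_distrib, ← Finset.sum_sub_distrib]
        exact Finset.sum_congr rfl fun n _ => by ring
      · rw [hJ2 (Xc z) i j k, hCas (Xc z) k, hCas (Xc z) j]
        simp only [sum_mul_stdE]
        by_cases hip : i = p <;> by_cases hjp : j = p <;> by_cases hkp : k = p <;>
          simp [hip, hjp, hkp, hC2p, hC1p, stdE_split] <;> try ring
    case inr.inl.inr =>
      trans ((∑ n, (C2 i j n * π₂ (Xc z) n k + C2 k i n * π₂ (Xc z) n j + C2 j k n * π₂ (Xc z) n i)) + c (Xc z) * (∑ n, (C2 i j) n * Matrix.single p p 1 n k) - c (Xc z) * (∑ n, (C2 k i) n * Matrix.single p p 1 n j) + c (Xc z) * (∑ n, (C2 j k) n * Matrix.single p p 1 n i) - Matrix.single p p 1 i j * (∑ n, pd n c (Xc z) * π₂ (Xc z) n k) + Matrix.single p p 1 j k * (∑ n, pd n c (Xc z) * π₂ (Xc z) n i) - (c (Xc z) * Matrix.single p p 1 i j) * (∑ n, pd n c (Xc z) * Matrix.single p p 1 n k) + (c (Xc z) * Matrix.single p p 1 j k) * (∑ n, pd n c (Xc z)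 * Matrix.single p p 1 n i) + (lam * eps * c (Xc z)) * (∑ n, (C1 k i) n * Matrix.single p p 1 n j))
      · simp only [Finset.mul_sum, ← Finset.sum_add_distrib, ← Finset.sum_sub_distrib]
        exact Finset.sum_congr rfl fun n _ => by ring
      · rw [hJ2 (Xc z) i j k, hCas (Xc z) k, hCas (Xc z) i]
        simp only [sum_mul_stdE]
        by_cases hip : i = p <;> by_cases hjp : j = p <;> by_cases hkp : k = p <;>
          simp [hip, hjp, hkp, hC2p, hC1p, stdE_split] <;> try ring
    case inr.inr.inl =>
      trans ((∑ n, (C2 i j n * π₂ (Xc z) n k + C2 k i n * π₂ (Xc z) n j + C2 j k n * π₂ (Xc z) n i)) - c (Xc z) * (∑ n, (C2 i j) n * Matrix.single p p 1 n k) + c (Xc z) * (∑ n, (C2 k i) n * Matrix.single p p 1 n j) + c (Xc z) * (∑ n, (C2 j k) n * Matrix.single p p 1 n i) + Matrix.single p p 1 k i * (∑ n, pd n c (Xc z) * π₂ (Xc z) n j) - Matrix.single p p 1 j k * (∑ n, pd n c (Xc z) * π₂ (Xc z) n i) + (c (Xc z) * Matrix.single p p 1 k i) * (∑ n, pd n c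 (Xc z) * Matrix.single p p 1 n j) - (c (Xc z) * Matrix.single p p 1 j k) * (∑ n, pd n c (Xc z) * Matrix.single p p 1 n i) + (lam * eps * c (Xc z)) * (∑ n, (C1 i j) n * Matrix.single p p 1 n k))
      · simp only [Finset.mul_sum, ← Finset.sum_add_distrib, ← Finset.sum_sub_distrib]
        exact Finset.sum_congr rfl fun n _ => by ring
      · rw [hJ2 (Xc z) i j k, hCas (Xc z) j, hCas (Xc z) i]
        simp only [sum_mul_stdE]
        by_cases hip : i = p <;> by_cases hjp : j = p <;> by_cases hkp : k = p <;>
          simp [hip, hjp, hkp, hC2p, hC1p, stdE_split] <;> try ring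
    case inr.inr.inr =>
      trans ((∑ n, (C2 i j n * π₂ (Yc z) n k + C2 k i n * π₂ (Yc z) n j + C2 j k n * π₂ (Yc z) n i)) + lam * (∑ n, (C1 i j n * π₂ (Xc z) n k + C2 i j n * π₁ (Xc z) n k + C1 k i n * π₂ (Xc z) n j + C2 k i n * π₁ (Xc z) n j + C1 j k n * π₂ (Xc z) n i + C2 j k n * π₁ (Xc z) n i)) - (lam * eps) * (∑ n, (C1 i j n * π₂ (Yc z) n k + C2 i j n * π₁ (Yc z) n k + C1 k i n * π₂ (Yc z) n j + C2 k i n * π₁ (Yc z) n j + C1 j k n * π₂ (Yc z) n i + C2 j k n * π₁ (Yc z) n i)) - (lam * lam * eps) * (∑ n, (C1 i j n * π₁ (Xc z) n k + C1 k i n * π₁ (Xc z) n j + C1 j k n * π₁ (Xc z) n i)) + (lam * lam * eps * eps) * (∑ n, (C1 i j n * π₁ (Yc z) n k + C1 k i n * π₁ (Yc z) n j + C1 j k n * π₁ (Yc z) n i)) + (lam * c (Xc z)) * (∑ n, (C1 i j) n * Matrix.single p p 1 n k) + (lam * c (Xc z)) * (∑ n, (C1 k i) n * Matrix.single p p 1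 n j) + (lam * c (Xc z)) * (∑ n, (C1 j k) n * Matrix.single p p 1 n i))
      · simp only [Finset.mul_sum, ← Finset.sum_add_distrib, ← Finset.sum_sub_distrib]
        exact Finset.sum_congr rfl fun n _ => by ring
      · rw [hJ2 (Yc z) i j k, hM (Xc z) i j k, hM (Yc z) i j k, hJ1 (Xc z) i j k, hJ1 (Yc z) i j k]
        simp only [sum_mul_stdE]
        simp [hC1p]
        try ring
end

section
/- Let π₁ and π₂ be Poisson tensors on ℝ^N satisfying, for all x, y ∈ ℝ^N and all indices i, j, k: (i) ∑_{s=1}^N ( π_{2,sk}(x) (∂π_{1,ij}/∂y_s)(y) + π_{2,sj}(x) (∂π_{1,ki}/∂y_s)(y) + π_{2,si}(x) (∂π_{1,jk}/∂y_s)(y) ) = 0; (ii) ∑_{s=1}^N ( (∑_{m=1}^N y_m (∂π_{2,sk}/∂x_m)(x)) (∂π_{1,ij}/∂y_s)(y) + π_{1,si}(y) (∂π_{2,jk}/∂x_s)(x) + π_{1,sj}(y) (∂π_{2,ki}/∂x_s)(x) ) = 0; and (iii) ∑_{s,m=1}^N y_s π_{1,mk}(y) (∂²π_{2,ij}/∂x_m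 ∂x_s)(x) = 0, where ∂π₁/∂y_s denotes the partial derivative of π₁ in its s-th argument evaluated at y. Then the 2N×2N matrix field on ℝ^{2N} with blocks Π^{xx}(x,y) = π₁(y), Π^{xy}(x,y) = π₂(x), Π^{yx}(x,y) = π₂(x), Π^{yy}(x,y) = ∑_{s=1}^N (∂π₂/∂x_s)(x) y_s is a Poisson tensor on ℝ^{2N} (denoted π₁ ⋉₁ π₂). -/
open scoped ContDiff

/-! ### Auxiliary lemmas about `pd` -/

section helpers
variable {ι : Type} [Fintype ι] [DecidableEq ι]

lemma pd_congr' {f g : (ι → ℝ) → ℝ} (h : ∀ x, f x = g x) (s : ι) (x : ι → ℝ) :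
    pd s f x = pd s g x := by
  have : f = g := funext h
  rw [this]

lemma pd_neg' (s : ι) (f : (ι → ℝ) → ℝ) (x : ι → ℝ) :
    pd s (fun x => -f x) x = - pd s f x := by
  simp [pd, fderiv_neg]

lemma pd_mul' {f g : (ι → ℝ) → ℝ} {x : ι → ℝ} (hf : DifferentiableAt ℝ f x)
    (hg : DifferentiableAt ℝ g x) (s : ι) :
    pd s (fun x => f x * g x) x = pd s f x * g x + f x * pd s g x := by
  simp [pd, fderiv_fun_mul hf hg]; ring

lemma pd_add' {f g : (ι → ℝ) → ℝ} {x : ι → ℝ} (hf : DifferentiableAt ℝ f x)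
    (hg : DifferentiableAt ℝ g x) (s : ι) :
    pd s (fun x => f x + g x) x = pd s f x + pd s g x := by
  simp [pd, fderiv_fun_add hf hg]

lemma pd_sum' {α : Type*} {u : Finset α} {f : α → (ι → ℝ) → ℝ} {x : ι → ℝ}
    (h : ∀ a ∈ u, DifferentiableAt ℝ (f a) x) (s : ι) :
    pd s (fun x => ∑ a ∈ u, f a x) x = ∑ a ∈ u, pd s (f a) x := by
  simp [pd, fderiv_fun_sum h]

lemma contDiff_pd {f : (ι → ℝ) → ℝ} (hf : ContDiff ℝ ∞ f) (s : ι) :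
    ContDiff ℝ ∞ (fun x => pd s f x) :=
  (hf.fderiv_right (by simp)).clm_apply contDiff_const

lemma pd_comm' {f : (ι → ℝ) → ℝ} (hf : ContDiff ℝ ∞ f) (s m : ι) (x : ι → ℝ) :
    pd m (fun x => pd s f x) x = pd s (fun x => pd m f x) x := by
  have hsym : IsSymmSndFDerivAt ℝ f x :=
    hf.contDiffAt.isSymmSndFDerivAt (by simp; norm_cast)
  have hd : DifferentiableAt ℝ (fderiv ℝ f) x :=
    ((hf.fderiv_right (m := ∞) (by simp)).differentiable (by norm_num)).differentiableAt
  have key : ∀ v w : ι → ℝ,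
      fderiv ℝ (fun x => fderiv ℝ f x v) x w = fderiv ℝ (fderiv ℝ f) x w v := by
    intro v w
    have := fderiv_clm_apply hd (differentiableAt_const v)
    simp [this]
  simp only [pd]
  rw [key, key, hsym]

end helpers

/-! ### The coordinate projections as continuous linear maps -/

noncomputable def Xl (N : ℕ) : ((Fin N ⊕ Fin N) → ℝ) →L[ℝ] (Fin N → ℝ) :=
  ContinuousLinearMap.pi fun i => ContinuousLinearMap.proj (Sum.inl i)

noncomputable def Yl (N : ℕ) : ((Fin N ⊕ Fin N) → ℝ) →L[ℝ] (Fin N → ℝ) :=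
  ContinuousLinearMap.pi fun i => ContinuousLinearMap.proj (Sum.inr i)

lemma Xl_apply {N : ℕ} (z : (Fin N ⊕ Fin N) → ℝ) : Xl N z = Xc z := rfl
lemma Yl_apply {N : ℕ} (z : (Fin N ⊕ Fin N) → ℝ) : Yl N z = Yc z := rfl

lemma Xl_single_inl {N : ℕ} (t : Fin N) :
    Xl N (Pi.single (Sum.inl t) 1) = Pi.single t 1 := by
  funext i
  simp [Xl, ContinuousLinearMap.proj, Pi.single_apply]

lemma Xl_single_inr {N : ℕ} (t : Fin N) :
    Xl N (Pi.single (Sum.inr t) 1) = 0 := by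
  funext i
  simp [Xl, ContinuousLinearMap.proj, Pi.single_apply]

lemma Yl_single_inl {N : ℕ} (t : Fin N) :
    Yl N (Pi.single (Sum.inl t) 1) = 0 := by
  funext i
  simp [Yl, ContinuousLinearMap.proj, Pi.single_apply]

lemma Yl_single_inr {N : ℕ} (t : Fin N) :
    Yl N (Pi.single (Sum.inr t) 1) = Pi.single t 1 := by
  funext i
  simp [Yl, ContinuousLinearMap.proj, Pi.single_apply]

lemma pd_compX {N : ℕ} {f : (Fin N → ℝ) → ℝ} {z : (Fin N ⊕ Fin N) → ℝ}
    (hf : DifferentiableAt ℝ f (Xc z)) (t : Fin N ⊕ Fin N) :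
    pd t (fun z => f (Xc z)) z = fderiv ℝ f (Xc z) (Xl N (Pi.single t 1)) := by
  have h : (fun z => f (Xc z)) = f ∘ (Xl N) := rfl
  rw [pd, h, fderiv_comp (f := ⇑(Xl N)) z hf ((Xl N).differentiableAt)]
  simp [ContinuousLinearMap.fderiv, Xl_apply]

lemma pd_compY {N : ℕ} {f : (Fin N → ℝ) → ℝ} {z : (Fin N ⊕ Fin N) → ℝ}
    (hf : DifferentiableAt ℝ f (Yc z)) (t : Fin N ⊕ Fin N) :
    pd t (fun z => f (Yc z)) z = fderiv ℝ f (Yc z) (Yl N (Pi.single t 1)) := by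
  have h : (fun z => f (Yc z)) = f ∘ (Yl N) := rfl
  rw [pd, h, fderiv_comp (f := ⇑(Yl N)) z hf ((Yl N).differentiableAt)]
  simp [ContinuousLinearMap.fderiv, Yl_apply]

lemma pd_compX_inl {N : ℕ} {f : (Fin N → ℝ) → ℝ} {z : (Fin N ⊕ Fin N) → ℝ}
    (hf : DifferentiableAt ℝ f (Xc z)) (t : Fin N) :
    pd (Sum.inl t) (fun z => f (Xc z)) z = pd t f (Xc z) := by
  rw [pd_compX hf, Xl_single_inl]; rfl

lemma pd_compX_inr {N : ℕ} {f : (Fin N → ℝ) → ℝ} {z : (Fin N ⊕ Fin N) → ℝ}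
    (hf : DifferentiableAt ℝ f (Xc z)) (t : Fin N) :
    pd (Sum.inr t) (fun z => f (Xc z)) z = 0 := by
  rw [pd_compX hf, Xl_single_inr]; simp

lemma pd_compY_inl {N : ℕ} {f : (Fin N → ℝ) → ℝ} {z : (Fin N ⊕ Fin N) → ℝ}
    (hf : DifferentiableAt ℝ f (Yc z)) (t : Fin N) :
    pd (Sum.inl t) (fun z => f (Yc z)) z = 0 := by
  rw [pd_compY hf, Yl_single_inl]; simp

lemma pd_compY_inr {N : ℕ} {f : (Fin N → ℝ) → ℝ} {z : (Fin N ⊕ Fin N) → ℝ}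
    (hf : DifferentiableAt ℝ f (Yc z)) (t : Fin N) :
    pd (Sum.inr t) (fun z => f (Yc z)) z = pd t f (Yc z) := by
  rw [pd_compY hf, Yl_single_inr]; rfl

lemma diff_Ycoord {N : ℕ} (m : Fin N) (z : (Fin N ⊕ Fin N) → ℝ) :
    DifferentiableAt ℝ (fun z : (Fin N ⊕ Fin N) → ℝ => Yc z m) z := by
  exact (ContinuousLinearMap.proj (R := ℝ) (φ := fun _ : Fin N ⊕ Fin N => ℝ)
    (Sum.inr m)).differentiableAt

lemma pd_Ycoord {N : ℕ} (t : Fin N ⊕ Fin N) (m : Fin N) (z : (Fin N ⊕ Fin N) → ℝ) :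
    pd t (fun z : (Fin N ⊕ Fin N) → ℝ => Yc z m) z = Pi.single (M := fun _ : Fin N ⊕ Fin N => ℝ) t 1 (Sum.inr m) := by
  have h : (fun z : (Fin N ⊕ Fin N) → ℝ => Yc z m)
      = (ContinuousLinearMap.proj (R := ℝ) (φ := fun _ : Fin N ⊕ Fin N => ℝ) (Sum.inr m)) := rfl
  rw [pd, h, ContinuousLinearMap.fderiv]
  rfl

lemma contDiffX {N : ℕ} {f : (Fin N → ℝ) → ℝ} (hf : ContDiff ℝ ∞ f) :
    ContDiff ℝ ∞ (fun z : (Fin N ⊕ Fin N) → ℝ => f (Xc z)) :=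
  hf.comp (Xl N).contDiff

lemma contDiffY {N : ℕ} {f : (Fin N → ℝ) → ℝ} (hf : ContDiff ℝ ∞ f) :
    ContDiff ℝ ∞ (fun z : (Fin N ⊕ Fin N) → ℝ => f (Yc z)) :=
  hf.comp (Yl N).contDiff

section Centry

variable {N : ℕ} (π₂ : (Fin N → ℝ) → Matrix (Fin N) (Fin N) ℝ)
  (h2 : ∀ i j, ContDiff ℝ ∞ fun x => π₂ x i j)

include h2

lemma diff_C_summand (i j m : Fin N) (z : (Fin N ⊕ Fin N) → ℝ) :
    DifferentiableAt ℝ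
      (fun z => Yc z m * pd m (fun x => π₂ x i j) (Xc z)) z := by
  exact (diff_Ycoord m z).mul
    (((contDiffX (contDiff_pd (h2 i j) m)).differentiable (by norm_num)).differentiableAt)

lemma pd_C_inl (i j : Fin N) (t : Fin N) (z : (Fin N ⊕ Fin N) → ℝ) :
    pd (Sum.inl t) (fun z => ∑ m, Yc z m * pd m (fun x => π₂ x i j) (Xc z)) z
    = ∑ m, Yc z m * pd t (fun x => pd m (fun x' => π₂ x' i j) x) (Xc z) := by
  rw [pd_sum' (fun m _ => diff_C_summand π₂ h2 i j m z)]
  refine Finset.sum_congr rfl fun m _ => ?_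
  rw [pd_mul' (diff_Ycoord m z)
    (((contDiffX (contDiff_pd (h2 i j) m)).differentiable (by norm_num)).differentiableAt),
    pd_Ycoord,
    pd_compX_inl (((contDiff_pd (h2 i j) m).differentiable (by norm_num)).differentiableAt)]
  simp [Pi.single_apply]

lemma pd_C_inr (i j : Fin N) (t : Fin N) (z : (Fin N ⊕ Fin N) → ℝ) :
    pd (Sum.inr t) (fun z => ∑ m, Yc z m * pd m (fun x => π₂ x i j) (Xc z)) z
    = pd t (fun x => π₂ x i j) (Xc z) := by
  rw [pd_sum' (fun m _ => diff_C_summand π₂ h2 i j m z)]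
  have : ∀ m : Fin N,
      pd (Sum.inr t) (fun z => Yc z m * pd m (fun x => π₂ x i j) (Xc z)) z
      = (if m = t then (1:ℝ) else 0) * pd m (fun x => π₂ x i j) (Xc z) := by
    intro m
    rw [pd_mul' (diff_Ycoord m z)
      (((contDiffX (contDiff_pd (h2 i j) m)).differentiable (by norm_num)).differentiableAt),
      pd_Ycoord,
      pd_compX_inr (((contDiff_pd (h2 i j) m).differentiable (by norm_num)).differentiableAt)]
    simp [Pi.single_apply]
  simp only [this, ite_mul, one_mul, zero_mul]
  simp
end Centry
/-- under conditions (i)–(iii), the semidirect-type tensor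
`π₁ ⋉₁ π₂ = [[π₁(y), π₂(x)],[π₂(x), ∑_s (∂π₂/∂x_s)(x) y_s]]` is Poisson on `ℝ^{2N}`. -/
theorem stmt15 {N : ℕ} (hN : 1 ≤ N)
    (π₁ π₂ : (Fin N → ℝ) → Matrix (Fin N) (Fin N) ℝ)
    (hπ₁ : IsPoissonTensor π₁) (hπ₂ : IsPoissonTensor π₂)
    (hi : ∀ (x y : Fin N → ℝ) (i j k : Fin N),
      ∑ s, (π₂ x s k * pd s (fun y' => π₁ y' i j) y
        + π₂ x s j * pd s (fun y' => π₁ y' k i) y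
        + π₂ x s i * pd s (fun y' => π₁ y' j k) y) = 0)
    (hii : ∀ (x y : Fin N → ℝ) (i j k : Fin N),
      ∑ s, ((∑ m, y m * pd m (fun x' => π₂ x' s k) x) * pd s (fun y' => π₁ y' i j) y
        + π₁ y s i * pd s (fun x' => π₂ x' j k) x
        + π₁ y s j * pd s (fun x' => π₂ x' k i) x) = 0)
    (hiii : ∀ (x y : Fin N → ℝ) (i j k : Fin N),
      ∑ s, ∑ m, y s * π₁ y m k
        * pd m (fun x' => pd s (fun x'' => π₂ x'' i j) x') x = 0) :
    IsPoissonTensor (fun z : (Fin N ⊕ Fin N) → ℝ =>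
      Matrix.fromBlocks
        (π₁ (Yc z))
        (π₂ (Xc z))
        (π₂ (Xc z))
        (∑ s, Yc z s • pdMat s π₂ (Xc z))) := by
  obtain ⟨sm1, as1, jac1⟩ := hπ₁
  obtain ⟨sm2, as2, jac2⟩ := hπ₂
  have D1 : ∀ (i j : Fin N) (y : Fin N → ℝ), DifferentiableAt ℝ (fun y' => π₁ y' i j) y :=
    fun i j y => ((sm1 i j).differentiable (by norm_num)).differentiableAt
  have D2 : ∀ (i j : Fin N) (x : Fin N → ℝ), DifferentiableAt ℝ (fun x' => π₂ x' i j) x :=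
    fun i j x => ((sm2 i j).differentiable (by norm_num)).differentiableAt
  have Dp2 : ∀ (s i j : Fin N) (x : Fin N → ℝ),
      DifferentiableAt ℝ (fun x' => pd s (fun y => π₂ y i j) x') x :=
    fun s i j x => ((contDiff_pd (sm2 i j) s).differentiable (by norm_num)).differentiableAt
  have hA_l : ∀ (z : (Fin N ⊕ Fin N) → ℝ) (t i j : Fin N),
      pd (Sum.inl t) (fun z => π₁ (Yc z) i j) z = 0 :=
    fun z t i j => pd_compY_inl (D1 i j _) t
  have hA_r : ∀ (z : (Fin N ⊕ Fin N) → ℝ) (t i j : Fin N),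
      pd (Sum.inr t) (fun z => π₁ (Yc z) i j) z = pd t (fun y => π₁ y i j) (Yc z) :=
    fun z t i j => pd_compY_inr (D1 i j _) t
  have hB_l : ∀ (z : (Fin N ⊕ Fin N) → ℝ) (t i j : Fin N),
      pd (Sum.inl t) (fun z => π₂ (Xc z) i j) z = pd t (fun x => π₂ x i j) (Xc z) :=
    fun z t i j => pd_compX_inl (D2 i j _) t
  have hB_r : ∀ (z : (Fin N ⊕ Fin N) → ℝ) (t i j : Fin N),
      pd (Sum.inr t) (fun z => π₂ (Xc z) i j) z = 0 :=
    fun z t i j => pd_compX_inr (D2 i j _) t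
  have hC_l : ∀ (z : (Fin N ⊕ Fin N) → ℝ) (t i j : Fin N),
      pd (Sum.inl t) (fun z => ∑ m, Yc z m * pd m (fun x => π₂ x i j) (Xc z)) z
      = ∑ m, Yc z m * pd t (fun x => pd m (fun x' => π₂ x' i j) x) (Xc z) :=
    fun z t i j => pd_C_inl π₂ sm2 i j t z
  have hC_r : ∀ (z : (Fin N ⊕ Fin N) → ℝ) (t i j : Fin N),
      pd (Sum.inr t) (fun z => ∑ m, Yc z m * pd m (fun x => π₂ x i j) (Xc z)) z
      = pd t (fun x => π₂ x i j) (Xc z) :=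
    fun z t i j => pd_C_inr π₂ sm2 i j t z
  refine ⟨?_, ?_, ?_⟩
  · -- smoothness
    intro i j
    rcases i with i | i <;> rcases j with j | j <;>
      simp only [Matrix.fromBlocks_apply₁₁, Matrix.fromBlocks_apply₁₂,
        Matrix.fromBlocks_apply₂₁, Matrix.fromBlocks_apply₂₂,
        Matrix.sum_apply, Finset.sum_apply, Matrix.smul_apply, pdMat, Matrix.of_apply, smul_eq_mul]
    · exact contDiffY (sm1 i j)
    · exact contDiffX (sm2 i j)
    · exact contDiffX (sm2 i j)
    · apply ContDiff.sum
      intro s _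
      exact ((ContinuousLinearMap.proj (R := ℝ) (φ := fun _ : Fin N ⊕ Fin N => ℝ)
        (Sum.inr s)).contDiff).mul (contDiffX (contDiff_pd (sm2 i j) s))
  · -- antisymmetry
    intro z i j
    rcases i with i | i <;> rcases j with j | j <;>
      simp only [Matrix.fromBlocks_apply₁₁, Matrix.fromBlocks_apply₁₂,
        Matrix.fromBlocks_apply₂₁, Matrix.fromBlocks_apply₂₂,
        Matrix.sum_apply, Finset.sum_apply, Matrix.smul_apply, pdMat, Matrix.of_apply, smul_eq_mul]
    · exact as1 _ i j
    · exact as2 _ i j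
    · exact as2 _ i j
    · rw [← Finset.sum_neg_distrib]
      refine Finset.sum_congr rfl fun s _ => ?_
      rw [pd_congr' (fun x => as2 x i j), pd_neg']
      ring
  · -- Jacobi
    intro z i j k
    rcases i with i | i <;> rcases j with j | j <;> rcases k with k | k <;>
      rw [Fintype.sum_sum_type] <;>
      simp only [Matrix.fromBlocks_apply₁₁, Matrix.fromBlocks_apply₁₂,
        Matrix.fromBlocks_apply₂₁, Matrix.fromBlocks_apply₂₂,
        Matrix.sum_apply, Finset.sum_apply, Matrix.smul_apply, pdMat, Matrix.of_apply, smul_eq_mul,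
        hA_l, hA_r, hB_l, hB_r, hC_l, hC_r, zero_mul, mul_zero, add_zero, zero_add,
        Finset.sum_const_zero]
    · -- (l,l,l)
      rw [← hi (Xc z) (Yc z) i j k]
      exact Finset.sum_congr rfl fun s _ => by ring
    · -- (l,l,r)
      rw [← Finset.sum_add_distrib, ← hii (Xc z) (Yc z) i j k]
      exact Finset.sum_congr rfl fun s _ => by ring
    · -- (l,r,l)
      rw [← Finset.sum_add_distrib, ← hii (Xc z) (Yc z) k i j]
      exact Finset.sum_congr rfl fun s _ => by ring
    · -- (l,r,r)
      have h2 := jac2 (Xc z) i j k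
      have h3 := hiii (Xc z) (Yc z) j k i
      rw [Finset.sum_comm] at h3
      have inner : ∀ s : Fin N,
          (∑ m, Yc z m * pd s (fun x' => pd m (fun x'' => π₂ x'' j k) x') (Xc z))
            * π₁ (Yc z) s i
          = ∑ m, Yc z m * π₁ (Yc z) s i
            * pd s (fun x' => pd m (fun x'' => π₂ x'' j k) x') (Xc z) := fun s => by
        rw [Finset.sum_mul]; exact Finset.sum_congr rfl fun m _ => by ring
      have htot : ∑ s : Fin N,
          ((pd s (fun y => π₂ y i j) (Xc z) * π₂ (Xc z) s k
            + pd s (fun y => π₂ y k i) (Xc z) * π₂ (Xc z) s j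
            + pd s (fun y => π₂ y j k) (Xc z) * π₂ (Xc z) s i)
          + ∑ m, Yc z m * π₁ (Yc z) s i
              * pd s (fun x' => pd m (fun x'' => π₂ x'' j k) x') (Xc z)) = 0 := by
        rw [Finset.sum_add_distrib, h2, h3]; norm_num
      rw [← Finset.sum_add_distrib, ← htot]
      exact Finset.sum_congr rfl fun s _ => by rw [inner s]; ring
    · -- (r,l,l)
      rw [← Finset.sum_add_distrib, ← hii (Xc z) (Yc z) j k i]
      exact Finset.sum_congr rfl fun s _ => by ring
    · -- (r,l,r)
      have h2 := jac2 (Xc z) i j k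
      have h3 := hiii (Xc z) (Yc z) k i j
      rw [Finset.sum_comm] at h3
      have inner : ∀ s : Fin N,
          (∑ m, Yc z m * pd s (fun x' => pd m (fun x'' => π₂ x'' k i) x') (Xc z))
            * π₁ (Yc z) s j
          = ∑ m, Yc z m * π₁ (Yc z) s j
            * pd s (fun x' => pd m (fun x'' => π₂ x'' k i) x') (Xc z) := fun s => by
        rw [Finset.sum_mul]; exact Finset.sum_congr rfl fun m _ => by ring
      have htot : ∑ s : Fin N,
          ((pd s (fun y => π₂ y i j) (Xc z) * π₂ (Xc z) s k
            + pd s (fun y => π₂ y k i) (Xc z) * π₂ (Xc z) s j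
            + pd s (fun y => π₂ y j k) (Xc z) * π₂ (Xc z) s i)
          + ∑ m, Yc z m * π₁ (Yc z) s j
              * pd s (fun x' => pd m (fun x'' => π₂ x'' k i) x') (Xc z)) = 0 := by
        rw [Finset.sum_add_distrib, h2, h3]; norm_num
      rw [← Finset.sum_add_distrib, ← htot]
      exact Finset.sum_congr rfl fun s _ => by rw [inner s]; ring
    · -- (r,r,l)
      have h2 := jac2 (Xc z) i j k
      have h3 := hiii (Xc z) (Yc z) i j k
      rw [Finset.sum_comm] at h3
      have inner : ∀ s : Fin N,
          (∑ m, Yc z m * pd s (fun x' => pd m (fun x'' => π₂ x'' i j) x') (Xc z))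
            * π₁ (Yc z) s k
          = ∑ m, Yc z m * π₁ (Yc z) s k
            * pd s (fun x' => pd m (fun x'' => π₂ x'' i j) x') (Xc z) := fun s => by
        rw [Finset.sum_mul]; exact Finset.sum_congr rfl fun m _ => by ring
      have htot : ∑ s : Fin N,
          ((pd s (fun y => π₂ y i j) (Xc z) * π₂ (Xc z) s k
            + pd s (fun y => π₂ y k i) (Xc z) * π₂ (Xc z) s j
            + pd s (fun y => π₂ y j k) (Xc z) * π₂ (Xc z) s i)
          + ∑ m, Yc z m * π₁ (Yc z) s k
              * pd s (fun x' => pd m (fun x'' => π₂ x'' i j) x') (Xc z)) = 0 := by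
        rw [Finset.sum_add_distrib, h2, h3]; norm_num
      rw [← Finset.sum_add_distrib, ← htot]
      exact Finset.sum_congr rfl fun s _ => by rw [inner s]; ring
    · -- (r,r,r)
      have hG : ∀ m : Fin N, ∑ s : Fin N,
          (pd s (fun x' => pd m (fun x'' => π₂ x'' i j) x') (Xc z) * π₂ (Xc z) s k
          + pd s (fun x' => π₂ x' i j) (Xc z) * pd m (fun x' => π₂ x' s k) (Xc z)
          + (pd s (fun x' => pd m (fun x'' => π₂ x'' k i) x') (Xc z) * π₂ (Xc z) s j
          + pd s (fun x' => π₂ x' k i) (Xc z) * pd m (fun x' => π₂ x' s j) (Xc z))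
          + (pd s (fun x' => pd m (fun x'' => π₂ x'' j k) x') (Xc z) * π₂ (Xc z) s i
          + pd s (fun x' => π₂ x' j k) (Xc z) * pd m (fun x' => π₂ x' s i) (Xc z))) = 0 := by
        intro m
        have h0 : pd m (fun x => ∑ s : Fin N, (pd s (fun y => π₂ y i j) x * π₂ x s k
            + pd s (fun y => π₂ y k i) x * π₂ x s j
            + pd s (fun y => π₂ y j k) x * π₂ x s i)) (Xc z) = 0 := by
          rw [pd_congr' (g := fun _ => (0:ℝ)) (fun x => jac2 x i j k)]
          simp [pd]
        rw [pd_sum' (fun s _ => (((Dp2 s i j _).fun_mul (D2 s k _)).fun_add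
          ((Dp2 s k i _).fun_mul (D2 s j _))).fun_add ((Dp2 s j k _).fun_mul (D2 s i _)))] at h0
        rw [← h0]
        refine Finset.sum_congr rfl fun s _ => ?_
        rw [pd_add' (((Dp2 s i j _).fun_mul (D2 s k _)).fun_add ((Dp2 s k i _).fun_mul (D2 s j _)))
              ((Dp2 s j k _).fun_mul (D2 s i _)),
            pd_add' ((Dp2 s i j _).fun_mul (D2 s k _)) ((Dp2 s k i _).fun_mul (D2 s j _)),
            pd_mul' (Dp2 s i j _) (D2 s k _), pd_mul' (Dp2 s k i _) (D2 s j _),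
            pd_mul' (Dp2 s j k _) (D2 s i _),
            pd_comm' (sm2 i j) s m, pd_comm' (sm2 k i) s m, pd_comm' (sm2 j k) s m]
      have key : ∀ s : Fin N,
          ((∑ m, Yc z m * pd s (fun x' => pd m (fun x'' => π₂ x'' i j) x') (Xc z)) * π₂ (Xc z) s k
          + (∑ m, Yc z m * pd s (fun x' => pd m (fun x'' => π₂ x'' k i) x') (Xc z)) * π₂ (Xc z) s j
          + (∑ m, Yc z m * pd s (fun x' => pd m (fun x'' => π₂ x'' j k) x') (Xc z)) * π₂ (Xc z) s i)
          + (pd s (fun x' => π₂ x' i j) (Xc z) * (∑ m, Yc z m * pd m (fun x' => π₂ x' s k) (Xc z))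
          + pd s (fun x' => π₂ x' k i) (Xc z) * (∑ m, Yc z m * pd m (fun x' => π₂ x' s j) (Xc z))
          + pd s (fun x' => π₂ x' j k) (Xc z) * (∑ m, Yc z m * pd m (fun x' => π₂ x' s i) (Xc z)))
          = ∑ m, Yc z m *
            (pd s (fun x' => pd m (fun x'' => π₂ x'' i j) x') (Xc z) * π₂ (Xc z) s k
            + pd s (fun x' => π₂ x' i j) (Xc z) * pd m (fun x' => π₂ x' s k) (Xc z)
            + (pd s (fun x' => pd m (fun x'' => π₂ x'' k i) x') (Xc z) * π₂ (Xc z) s j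
            + pd s (fun x' => π₂ x' k i) (Xc z) * pd m (fun x' => π₂ x' s j) (Xc z))
            + (pd s (fun x' => pd m (fun x'' => π₂ x'' j k) x') (Xc z) * π₂ (Xc z) s i
            + pd s (fun x' => π₂ x' j k) (Xc z) * pd m (fun x' => π₂ x' s i) (Xc z))) := by
        intro s
        rw [Finset.sum_mul, Finset.sum_mul, Finset.sum_mul,
            Finset.mul_sum, Finset.mul_sum, Finset.mul_sum]
        simp only [← Finset.sum_add_distrib]
        exact Finset.sum_congr rfl fun m _ => by ring
      have htot : ∑ s : Fin N, ∑ m : Fin N, Yc z m *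
            (pd s (fun x' => pd m (fun x'' => π₂ x'' i j) x') (Xc z) * π₂ (Xc z) s k
            + pd s (fun x' => π₂ x' i j) (Xc z) * pd m (fun x' => π₂ x' s k) (Xc z)
            + (pd s (fun x' => pd m (fun x'' => π₂ x'' k i) x') (Xc z) * π₂ (Xc z) s j
            + pd s (fun x' => π₂ x' k i) (Xc z) * pd m (fun x' => π₂ x' s j) (Xc z))
            + (pd s (fun x' => pd m (fun x'' => π₂ x'' j k) x') (Xc z) * π₂ (Xc z) s i
            + pd s (fun x' => π₂ x' j k) (Xc z) * pd m (fun x' => π₂ x' s i) (Xc z))) = 0 := by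
        rw [Finset.sum_comm]
        refine Finset.sum_eq_zero fun m _ => ?_
        rw [← Finset.mul_sum, hG m, mul_zero]
      rw [← Finset.sum_add_distrib, ← htot]
      exact Finset.sum_congr rfl fun s _ => key s
end

section
/- Let π₂ be a constant Poisson tensor on ℝ^N (π₂(x) = A for all x, where A is a constant antisymmetric N×N real matrix) and let π₁ be a Poisson tensor on ℝ^N compatible with π₂. Then the pair (π₁, π₂) satisfies, for all x, y ∈ ℝ^N and all indices i, j, k: (i) ∑_{s=1}^N ( π_{2,sk}(x) (∂π_{1,ij}/∂y_s)(y) + π_{2,sj}(x) (∂π_{1,ki}/∂y_s)(y) + π_{2,si}(x) (∂π_{1,jk}/∂y_s)(y) ) = 0; (ii) ∑_{s=1}^N ( (∑_{m=1}^N y_m (∂π_{2,sk}/∂x_m)(x)) (∂π_{1,ij}/∂y_s)(y) + π_{1,si}(y) (∂π_{2,jk}/∂x_s)(x) + π_{1,sj}(y) (∂π_{2,ki}/∂x_s)(x) ) = 0; and (iii) ∑_{s,m=1}^N y_s π_{1,mk}(y) (∂²π_{2,ij}/∂x_m ∂x_s)(x) = 0 (here ∂π₁/∂y_s is the partial derivative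 of π₁ in its s-th argument evaluated at y). In particular, the matrix field with blocks Π^{xx}(x,y) = π₁(y), Π^{xy} = Π^{yx} = A, Π^{yy} = 0 is a Poisson tensor on ℝ^{2N}. -/
open scoped ContDiff

lemma pd_const {ι : Type} [Fintype ι] [DecidableEq ι] (s : ι) (c : ℝ) (x : ι → ℝ) :
    pd s (fun _ => c) x = 0 := by
  simp [pd]

lemma pd_add_const {ι : Type} [Fintype ι] [DecidableEq ι] (s : ι)
    (f : (ι → ℝ) → ℝ) (c : ℝ) (x : ι → ℝ) :
    pd s (fun y => f y + c) x = pd s f x := by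
  simp [pd, fderiv_add_const]

noncomputable def Lr (N : ℕ) : ((Fin N ⊕ Fin N) → ℝ) →L[ℝ] (Fin N → ℝ) :=
  ContinuousLinearMap.pi fun i => ContinuousLinearMap.proj (Sum.inr i)

lemma Lr_apply {N : ℕ} (z : (Fin N ⊕ Fin N) → ℝ) : Lr N z = Yc z := rfl

lemma fderiv_comp_Yc {N : ℕ} (f : (Fin N → ℝ) → ℝ) (hf : Differentiable ℝ f)
    (z : (Fin N ⊕ Fin N) → ℝ) :
    fderiv ℝ (fun z => f (Yc z)) z = (fderiv ℝ f (Yc z)).comp (Lr N) := by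
  have hY : Yc (N := N) = ⇑(Lr N) := rfl
  rw [hY, show (fun z => f (Lr N z)) = f ∘ (Lr N) from rfl,
    fderiv_comp z (hf.differentiableAt) (Lr N).differentiableAt, (Lr N).fderiv]

lemma pd_Yc_inl {N : ℕ} (f : (Fin N → ℝ) → ℝ) (hf : Differentiable ℝ f) (s : Fin N)
    (z : (Fin N ⊕ Fin N) → ℝ) :
    pd (Sum.inl s) (fun z => f (Yc z)) z = 0 := by
  rw [pd, fderiv_comp_Yc f hf]
  have : Lr N (Pi.single (Sum.inl s) 1) = 0 := by
    funext i; simp [Lr_apply, Lr, Yc, Pi.single_apply]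
  simp [ContinuousLinearMap.comp_apply, this]

lemma pd_Yc_inr {N : ℕ} (f : (Fin N → ℝ) → ℝ) (hf : Differentiable ℝ f) (s : Fin N)
    (z : (Fin N ⊕ Fin N) → ℝ) :
    pd (Sum.inr s) (fun z => f (Yc z)) z = pd s f (Yc z) := by
  rw [pd, fderiv_comp_Yc f hf]
  have : Lr N (Pi.single (Sum.inr s) 1) = Pi.single s 1 := by
    funext i; simp [Lr_apply, Lr, Yc, Pi.single_apply, Sum.inr.injEq]
  simp [ContinuousLinearMap.comp_apply, this, pd]


/-- a constant Poisson tensor `π₂ = A` together with any compatible Poisson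
tensor `π₁` satisfies conditions (i)–(iii), and hence
`[[π₁(y), A],[A, 0]]` is a Poisson tensor on `ℝ^{2N}`. -/
theorem stmt17 {N : ℕ} (hN : 1 ≤ N)
    (A : Matrix (Fin N) (Fin N) ℝ) (hA : ∀ i j, A j i = - A i j)
    (π₂ : (Fin N → ℝ) → Matrix (Fin N) (Fin N) ℝ) (hconst : ∀ x, π₂ x = A)
    (π₁ : (Fin N → ℝ) → Matrix (Fin N) (Fin N) ℝ) (hπ₁ : IsPoissonTensor π₁)
    (hcomp : IsPoissonTensor (fun x => π₁ x + π₂ x)) :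
    (∀ (x y : Fin N → ℝ) (i j k : Fin N),
      ∑ s, (π₂ x s k * pd s (fun y' => π₁ y' i j) y
        + π₂ x s j * pd s (fun y' => π₁ y' k i) y
        + π₂ x s i * pd s (fun y' => π₁ y' j k) y) = 0) ∧
    (∀ (x y : Fin N → ℝ) (i j k : Fin N),
      ∑ s, ((∑ m, y m * pd m (fun x' => π₂ x' s k) x) * pd s (fun y' => π₁ y' i j) y
        + π₁ y s i * pd s (fun x' => π₂ x' j k) x
        + π₁ y s j * pd s (fun x' => π₂ x' k i) x) = 0) ∧
    (∀ (x y : Fin N → ℝ) (i j k : Fin N),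
      ∑ s, ∑ m, y s * π₁ y m k
        * pd m (fun x' => pd s (fun x'' => π₂ x'' i j) x') x = 0) ∧
    IsPoissonTensor (fun z : (Fin N ⊕ Fin N) → ℝ =>
      Matrix.fromBlocks (π₁ (Yc z)) A A 0) := by
  have hdiff : ∀ a b, Differentiable ℝ fun y => π₁ y a b := fun a b =>
    (hπ₁.1 a b).differentiable (by simp)
  have key : ∀ (y : Fin N → ℝ) (i j k : Fin N),
      ∑ s, (pd s (fun y' => π₁ y' i j) y * A s k
        + pd s (fun y' => π₁ y' k i) y * A s j
        + pd s (fun y' => π₁ y' j k) y * A s i) = 0 := by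
    intro y i j k
    have h1 := hπ₁.2.2 y i j k
    have h2 := hcomp.2.2 y i j k
    simp only [Matrix.add_apply, hconst, pd_add_const] at h2
    have h3 : ∑ s, (pd s (fun y' => π₁ y' i j) y * (π₁ y s k + A s k)
        + pd s (fun y' => π₁ y' k i) y * (π₁ y s j + A s j)
        + pd s (fun y' => π₁ y' j k) y * (π₁ y s i + A s i))
        = (∑ s, (pd s (fun y' => π₁ y' i j) y * π₁ y s k
            + pd s (fun y' => π₁ y' k i) y * π₁ y s j
            + pd s (fun y' => π₁ y' j k) y * π₁ y s i))
        + ∑ s, (pd s (fun y' => π₁ y' i j) y * A s k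
            + pd s (fun y' => π₁ y' k i) y * A s j
            + pd s (fun y' => π₁ y' j k) y * A s i) := by
      rw [← Finset.sum_add_distrib]
      exact Finset.sum_congr rfl fun s _ => by ring
    rw [h3, h1, zero_add] at h2
    exact h2
  refine ⟨?_, ?_, ?_, ?_⟩
  · intro x y i j k
    simpa only [hconst, mul_comm] using key y i j k
  · intro x y i j k
    simp [hconst, pd_const]
  · intro x y i j k
    simp [hconst, pd_const]
  · have hYc : ContDiff ℝ ∞ (Yc (N := N)) := (Lr N).contDiff
    have H0 : ∀ (a b s : Fin N) (z : (Fin N ⊕ Fin N) → ℝ),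
        pd (Sum.inl s) (fun z => π₁ (Yc z) a b) z = 0 :=
      fun a b s z => pd_Yc_inl _ (hdiff a b) s z
    have H1 : ∀ (a b s : Fin N) (z : (Fin N ⊕ Fin N) → ℝ),
        pd (Sum.inr s) (fun z => π₁ (Yc z) a b) z = pd s (fun y => π₁ y a b) (Yc z) :=
      fun a b s z => pd_Yc_inr _ (hdiff a b) s z
    refine ⟨?_, ?_, ?_⟩
    · rintro (a | a) (b | b)
      · simp only [Matrix.fromBlocks_apply₁₁]; exact (hπ₁.1 a b).comp hYc
      · simp only [Matrix.fromBlocks_apply₁₂]; exact contDiff_const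
      · simp only [Matrix.fromBlocks_apply₂₁]; exact contDiff_const
      · simp only [Matrix.fromBlocks_apply₂₂, Matrix.zero_apply]; exact contDiff_const
    · rintro z (a | a) (b | b)
      · simpa only [Matrix.fromBlocks_apply₁₁] using hπ₁.2.1 (Yc z) a b
      · simpa only [Matrix.fromBlocks_apply₁₂, Matrix.fromBlocks_apply₂₁] using hA a b
      · simp only [Matrix.fromBlocks_apply₂₁, Matrix.fromBlocks_apply₁₂]
        exact hA a b
      · simp
    · rintro z (a | a) (b | b) (c | c) <;>
        simp only [Matrix.fromBlocks_apply₁₁, Matrix.fromBlocks_apply₁₂,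
          Matrix.fromBlocks_apply₂₁, Matrix.fromBlocks_apply₂₂, Matrix.zero_apply,
          Fintype.sum_sum_type, H0, H1, pd_const, zero_mul, mul_zero, add_zero,
          zero_add, Finset.sum_const_zero] <;>
        first
          | exact key (Yc z) a b c
          | simp
end
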